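/- arXiv:1601.00856 — 4 statements merged into one kernel-verified Lean document; each statement's English description precedes it below -/
import Mathlib

section
/- Let α ∈ [1,2]. There exist constants C > 0 and k₀ ∈ ℕ depending only on α such that the following holds. Let H₁, H₂ be dyadic numbers with H₁ ≥ 2^{k₀} H₂; let g₁, g₂ : ℝ² → [0,∞) be L² functions supported in Δ_{H₁} and Δ_{H₂} respectively, and let g : ℝ³ → [0,∞) be an L² function. Then ∫_{ℝ²×ℝ²} g₁(ζ₁) g₂(ζ₂) g(Ω(ζ₁,ζ₂), ζ₁+ζ₂) dζ₁ dζ₂ ≤ C H₁^{−1/2} H₂^{1/4} ‖g₁‖_{L²(ℝ²)} ‖g₂‖_{L²(ℝ²)} ‖g‖_{L²(ℝ³)}. -/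
open MeasureTheory Set Function Filter
open scoped ENNReal NNReal

noncomputable section

def IsDyadic (x : ℝ) : Prop := ∃ k : ℕ, x = 2 ^ k

def omegaBOZK (α : ℝ) (ζ : ℝ × ℝ) : ℝ := ζ.1 * (|ζ.1| ^ α + ζ.2 ^ 2)

def hBOZK (α : ℝ) (ζ : ℝ × ℝ) : ℝ := (α + 1) * |ζ.1| ^ α + ζ.2 ^ 2

def ISet (N : ℝ) : Set ℝ := if N = 1 then Icc (-2) 2 else {ξ | N / 2 ≤ |ξ| ∧ |ξ| ≤ 2 * N}

def DeltaSet (α H : ℝ) : Set (ℝ × ℝ) := {ζ | hBOZK α ζ ∈ ISet H}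

def DSet (α H L : ℝ) : Set (ℝ × ℝ × ℝ) :=
  {z | z.2 ∈ DeltaSet α H ∧ |z.1 + omegaBOZK α z.2| ≤ L}

/-- Resonance function `Ω(ζ₁,ζ₂) = ω(ζ₁+ζ₂) - ω(ζ₁) - ω(ζ₂)`. -/
def OmegaRes (α : ℝ) (ζ₁ ζ₂ : ℝ × ℝ) : ℝ :=
  omegaBOZK α (ζ₁ + ζ₂) - omegaBOZK α ζ₁ - omegaBOZK α ζ₂

lemma hasDerivAt_mul_abs_rpow {α : ℝ} (hα : 1 ≤ α) (x : ℝ) :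
    HasDerivAt (fun y : ℝ => y * |y| ^ α) ((α + 1) * |x| ^ α) x := by
  rcases lt_trichotomy x 0 with hx | hx | hx
  · rw [abs_of_neg hx]
    have h1 : HasDerivAt (fun y : ℝ => -((-y) ^ (α+1))) ((α+1) * (-x) ^ α) x := by
      have h0 : HasDerivAt (fun y : ℝ => (-y) ^ (α+1)) (-((α+1) * (-x) ^ (α+1-1))) x := by
        have := (Real.hasDerivAt_rpow_const (x := -x) (p := α+1)
          (Or.inl (ne_of_gt (neg_pos.mpr hx))))
        simpa [Function.comp_def] using this.comp x (hasDerivAt_neg x)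
      have := h0.neg
      rw [add_sub_cancel_right] at this
      simpa [Pi.neg_def] using this
    apply h1.congr_of_eventuallyEq
    filter_upwards [eventually_lt_nhds hx] with y hy
    rw [abs_of_neg hy, Real.rpow_add_one (ne_of_gt (neg_pos.mpr hy))]
    ring
  · subst hx
    rw [hasDerivAt_iff_tendsto_slope]
    have h2 : (α + 1) * |(0:ℝ)| ^ α = 0 := by
      simp [Real.zero_rpow (by linarith : α ≠ 0)]
    rw [h2]
    have hcont : Tendsto (fun y : ℝ => |y| ^ α) (nhds 0) (nhds 0) := by
      have : ContinuousAt (fun y : ℝ => |y| ^ α) 0 := by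
        exact (Real.continuousAt_rpow_const _ _ (Or.inr (by linarith))).comp
          continuous_abs.continuousAt
      simpa [Real.zero_rpow (by linarith : α ≠ 0)] using this.tendsto
    apply (hcont.mono_left nhdsWithin_le_nhds).congr'
    filter_upwards [self_mem_nhdsWithin] with y hy
    have hy0 : (y:ℝ) ≠ 0 := hy
    simp only [slope, sub_zero, vsub_eq_sub, zero_mul, smul_eq_mul]
    field_simp
  · rw [abs_of_pos hx]
    have h1 : HasDerivAt (fun y : ℝ => y ^ (α+1)) ((α+1) * x ^ α) x := by
      have := Real.hasDerivAt_rpow_const (x := x) (p := α+1) (Or.inl (ne_of_gt hx))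
      rw [add_sub_cancel_right] at this
      exact this
    apply h1.congr_of_eventuallyEq
    filter_upwards [eventually_gt_nhds hx] with y hy
    rw [abs_of_pos hy, Real.rpow_add_one (ne_of_gt hy)]
    ring

lemma oneD {Ψ dΨ : ℝ → ℝ} (hd : ∀ x, HasDerivAt Ψ (dΨ x) x) {J A : Set ℝ}
    (hJ : Convex ℝ J) (hA : MeasurableSet A) (hAJ : A ⊆ J) {c : ℝ} (hc : 0 < c)
    (hlb : ∀ x ∈ J, c ≤ dΨ x) (G : ℝ → ℝ≥0∞) :
    ∫⁻ x in A, G (Ψ x) ≤ ENNReal.ofReal (1 / c) * ∫⁻ τ, G τ := by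
  have hmono : StrictMonoOn Ψ J := by
    apply strictMonoOn_of_deriv_pos hJ
    · exact fun x _ => (hd x).continuousAt.continuousWithinAt
    · intro x hx
      rw [(hd x).deriv]
      exact lt_of_lt_of_le hc (hlb x (interior_subset hx))
  have hinj : InjOn Ψ A := (hmono.injOn).mono hAJ
  have hder : ∀ x ∈ A, HasFDerivWithinAt Ψ
      ((1 : ℝ →L[ℝ] ℝ).smulRight (dΨ x)) A x :=
    fun x _ => ((hd x).hasDerivWithinAt).hasFDerivWithinAt
  have himg := lintegral_image_eq_lintegral_abs_det_fderiv_mul volume hA hder hinj G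
  simp only [ContinuousLinearMap.smulRight_one_eq_toSpanSingleton,
    ContinuousLinearMap.det_toSpanSingleton] at himg
  calc ∫⁻ x in A, G (Ψ x)
      ≤ ∫⁻ x in A, ENNReal.ofReal (1 / c) * (ENNReal.ofReal |dΨ x| * G (Ψ x)) := by
        apply setLIntegral_mono' hA
        intro x hx
        have h1 : (1 : ℝ≥0∞) ≤ ENNReal.ofReal (1 / c) * ENNReal.ofReal |dΨ x| := by
          rw [← ENNReal.ofReal_mul (by positivity)]
          have : (1 : ℝ) ≤ 1 / c * |dΨ x| := by
            rw [abs_of_pos (lt_of_lt_of_le hc (hlb x (hAJ hx)))]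
            rw [div_mul_eq_mul_div, one_mul, le_div_iff₀ hc, one_mul]
            exact hlb x (hAJ hx)
          exact ENNReal.one_le_ofReal.mpr this
        calc G (Ψ x) = 1 * G (Ψ x) := (one_mul _).symm
          _ ≤ ENNReal.ofReal (1 / c) * ENNReal.ofReal |dΨ x| * G (Ψ x) :=
              mul_le_mul_left h1 _
          _ = ENNReal.ofReal (1 / c) * (ENNReal.ofReal |dΨ x| * G (Ψ x)) := mul_assoc _ _ _
    _ = ENNReal.ofReal (1 / c) * ∫⁻ x in A, ENNReal.ofReal |dΨ x| * G (Ψ x) :=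
        lintegral_const_mul' _ _ ENNReal.ofReal_ne_top
    _ = ENNReal.ofReal (1 / c) * ∫⁻ τ in Ψ '' A, G τ := by rw [himg]
    _ ≤ ENNReal.ofReal (1 / c) * ∫⁻ τ, G τ :=
        mul_le_mul_right (setLIntegral_le_lintegral _ _) _

lemma hBOZK_nonneg {α : ℝ} (hα : 1 ≤ α) (ζ : ℝ × ℝ) : 0 ≤ hBOZK α ζ := by
  have := Real.rpow_nonneg (abs_nonneg ζ.1) α
  have : 0 ≤ (α + 1) * |ζ.1| ^ α := by positivity
  simp only [hBOZK]; positivity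

lemma hBOZK_le_of_mem {α H : ℝ} (hα : 1 ≤ α) (hH : 1 ≤ H) {ζ : ℝ × ℝ}
    (h : ζ ∈ DeltaSet α H) : hBOZK α ζ ≤ 2 * H := by
  simp only [DeltaSet, ISet, mem_setOf_eq] at h
  split_ifs at h with h1
  · subst h1; linarith [h.2]
  · exact le_trans (le_abs_self _) h.2

lemma le_hBOZK_of_mem {α H : ℝ} (hα : 1 ≤ α) (hH : H ≠ 1) {ζ : ℝ × ℝ}
    (h : ζ ∈ DeltaSet α H) : H / 2 ≤ hBOZK α ζ := by
  simp only [DeltaSet, ISet, mem_setOf_eq, if_neg hH] at h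
  calc H / 2 ≤ |hBOZK α ζ| := h.1
    _ = hBOZK α ζ := abs_of_nonneg (hBOZK_nonneg hα ζ)

lemma hasDerivAt_omega {α : ℝ} (hα : 1 ≤ α) (m x : ℝ) :
    HasDerivAt (fun y => omegaBOZK α (y, m)) (hBOZK α (x, m)) x := by
  have h1 := (hasDerivAt_mul_abs_rpow hα x).add ((hasDerivAt_id x).mul_const (m ^ 2))
  have h2 : HasDerivAt (fun y => omegaBOZK α (y, m)) ((α + 1) * |x| ^ α + 1 * m ^ 2) x := by
    apply h1.congr_of_eventuallyEq
    filter_upwards with y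
    simp only [omegaBOZK, id, Pi.add_apply]; ring
  convert h2 using 1
  simp only [hBOZK]; ring

lemma hasDerivAt_Psi {α : ℝ} (hα : 1 ≤ α) (ξ μ μ₂ x : ℝ) :
    HasDerivAt (fun y => omegaBOZK α (ξ, μ) - omegaBOZK α (ξ - y, μ - μ₂)
        - omegaBOZK α (y, μ₂))
      (hBOZK α (ξ - x, μ - μ₂) - hBOZK α (x, μ₂)) x := by
  have h1 : HasDerivAt (fun y : ℝ => omegaBOZK α (ξ - y, μ - μ₂))
      (hBOZK α (ξ - x, μ - μ₂) * (-1)) x := by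
    have hin : HasDerivAt (fun y : ℝ => ξ - y) (-1 : ℝ) x := by
      exact (hasDerivAt_id' x).const_sub ξ
    exact (hasDerivAt_omega hα (μ - μ₂) (ξ - x)).comp x hin
  have h2 := ((hasDerivAt_const x (omegaBOZK α (ξ, μ))).sub h1).sub
    (hasDerivAt_omega hα μ₂ x)
  exact h2.congr_deriv (by ring)

lemma rpow_abs_mono {α : ℝ} (hα : 1 ≤ α) {a b : ℝ} (h : |a| ≤ |b|) :
    |a| ^ α ≤ |b| ^ α :=
  Real.rpow_le_rpow (abs_nonneg a) h (by linarith)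

lemma convex_J1 {α H₁ H₂ : ℝ} (hα : 1 ≤ α) (ξ μ μ₂ : ℝ) :
    Convex ℝ {x : ℝ | x ≤ ξ ∧ hBOZK α (x, μ₂) ≤ 2 * H₂ ∧
      H₁ / 2 ≤ hBOZK α (ξ - x, μ - μ₂)} := by
  rw [convex_iff_ordConnected]
  constructor
  intro a ha b hb z hz
  obtain ⟨haz, hzb⟩ := hz
  refine ⟨le_trans hzb hb.1, ?_, ?_⟩
  · have habs : |z| ≤ max |a| |b| := abs_le_max_abs_abs haz hzb
    rcases max_cases |a| |b| with ⟨he, _⟩ | ⟨he, _⟩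
    · have := rpow_abs_mono hα (he ▸ habs)
      simp only [hBOZK] at ha ⊢
      nlinarith [ha.2.1]
    · have := rpow_abs_mono hα (he ▸ habs)
      simp only [hBOZK] at hb ⊢
      nlinarith [hb.2.1]
  · have h1 : |ξ - b| ≤ |ξ - z| := by
      rw [abs_of_nonneg (by linarith [hb.1] : (0:ℝ) ≤ ξ - b),
        abs_of_nonneg (by linarith [le_trans hzb hb.1] : (0:ℝ) ≤ ξ - z)]
      linarith
    have := rpow_abs_mono hα h1
    simp only [hBOZK] at hb ⊢
    nlinarith [hb.2.2]

lemma convex_J2 {α H₁ H₂ : ℝ} (hα : 1 ≤ α) (ξ μ μ₂ : ℝ) :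
    Convex ℝ {x : ℝ | ξ ≤ x ∧ hBOZK α (x, μ₂) ≤ 2 * H₂ ∧
      H₁ / 2 ≤ hBOZK α (ξ - x, μ - μ₂)} := by
  rw [convex_iff_ordConnected]
  constructor
  intro a ha b hb z hz
  obtain ⟨haz, hzb⟩ := hz
  refine ⟨le_trans ha.1 haz, ?_, ?_⟩
  · have habs : |z| ≤ max |a| |b| := abs_le_max_abs_abs haz hzb
    rcases max_cases |a| |b| with ⟨he, _⟩ | ⟨he, _⟩
    · have := rpow_abs_mono hα (he ▸ habs)
      simp only [hBOZK] at ha ⊢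
      nlinarith [ha.2.1]
    · have := rpow_abs_mono hα (he ▸ habs)
      simp only [hBOZK] at hb ⊢
      nlinarith [hb.2.1]
  · have h1 : |ξ - a| ≤ |ξ - z| := by
      rw [abs_of_nonpos (by linarith [ha.1] : ξ - a ≤ 0),
        abs_of_nonpos (by linarith [le_trans ha.1 haz] : ξ - z ≤ 0)]
      linarith
    have := rpow_abs_mono hα h1
    simp only [hBOZK] at ha ⊢
    nlinarith [ha.2.2]

lemma continuous_hBOZK {α : ℝ} (hα : 1 ≤ α) : Continuous (hBOZK α) := by
  apply Continuous.add
  · exact continuous_const.mul ((continuous_fst.abs).rpow_const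
      (fun x => Or.inr (by linarith)))
  · exact (continuous_snd.pow 2)

lemma measurableSet_ISet (N : ℝ) : MeasurableSet (ISet N) := by
  unfold ISet
  split_ifs
  · exact measurableSet_Icc
  · exact ((measurableSet_le measurable_const measurable_abs).inter
      (measurableSet_le measurable_abs measurable_const))

lemma measurableSet_DeltaSet {α H : ℝ} (hα : 1 ≤ α) : MeasurableSet (DeltaSet α H) :=
  (measurableSet_ISet H).preimage (continuous_hBOZK hα).measurable

lemma innerbound {α H₁ H₂ : ℝ} (hα : 1 ≤ α) (hH₂ : 1 ≤ H₂) (hk : 8 * H₂ ≤ H₁)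
    (ξ μ μ₂ : ℝ) (G : ℝ → ℝ≥0∞) :
    ∫⁻ x in {x : ℝ | (ξ - x, μ - μ₂) ∈ DeltaSet α H₁ ∧ (x, μ₂) ∈ DeltaSet α H₂},
        G (omegaBOZK α (ξ, μ) - omegaBOZK α (ξ - x, μ - μ₂) - omegaBOZK α (x, μ₂))
      ≤ (Icc (-Real.sqrt (2 * H₂)) (Real.sqrt (2 * H₂))).indicator
          (fun _ => ENNReal.ofReal (8 / H₁) * ∫⁻ τ, G τ) μ₂ := by
  have hH₁8 : (8:ℝ) ≤ H₁ := by linarith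
  have hH₁0 : (0:ℝ) < H₁ := by linarith
  have hH₁ne : H₁ ≠ 1 := by linarith
  set A := {x : ℝ | (ξ - x, μ - μ₂) ∈ DeltaSet α H₁ ∧ (x, μ₂) ∈ DeltaSet α H₂} with hAdef
  by_cases hμ₂ : μ₂ ∈ Icc (-Real.sqrt (2 * H₂)) (Real.sqrt (2 * H₂))
  swap
  · have hAe : A = ∅ := by
      rw [eq_empty_iff_forall_notMem]
      intro x hx
      have h2 : hBOZK α (x, μ₂) ≤ 2 * H₂ := hBOZK_le_of_mem hα hH₂ hx.2
      have hsq : μ₂ ^ 2 ≤ 2 * H₂ := by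
        simp only [hBOZK] at h2
        nlinarith [Real.rpow_nonneg (abs_nonneg x) α, hα]
      have habs : |μ₂| ≤ Real.sqrt (2 * H₂) := Real.abs_le_sqrt hsq
      exact hμ₂ (abs_le.mp habs)
    rw [hAe]
    simp
  rw [indicator_of_mem hμ₂]
  -- the main estimate
  set Ψ : ℝ → ℝ := fun x => omegaBOZK α (ξ, μ) - omegaBOZK α (ξ - x, μ - μ₂)
    - omegaBOZK α (x, μ₂) with hΨdef
  set dΨ : ℝ → ℝ := fun x => hBOZK α (ξ - x, μ - μ₂) - hBOZK α (x, μ₂) with hdΨdef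
  have hd : ∀ x, HasDerivAt Ψ (dΨ x) x := fun x => hasDerivAt_Psi hα ξ μ μ₂ x
  set J₁ := {x : ℝ | x ≤ ξ ∧ hBOZK α (x, μ₂) ≤ 2 * H₂ ∧
      H₁ / 2 ≤ hBOZK α (ξ - x, μ - μ₂)} with hJ₁def
  set J₂ := {x : ℝ | ξ ≤ x ∧ hBOZK α (x, μ₂) ≤ 2 * H₂ ∧
      H₁ / 2 ≤ hBOZK α (ξ - x, μ - μ₂)} with hJ₂def
  have hmJ : ∀ ξ' μ' μ₂' H', MeasurableSet {x : ℝ | hBOZK α (ξ' - x, μ' - μ₂') ≤ H'} := by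
    intro ξ' μ' μ₂' H'
    exact measurableSet_le (((continuous_hBOZK hα).comp
      (by continuity : Continuous fun x : ℝ => (ξ' - x, μ' - μ₂'))).measurable)
      measurable_const
  have hcont1 : Continuous fun x : ℝ => hBOZK α (x, μ₂) :=
    (continuous_hBOZK hα).comp (by continuity)
  have hcont2 : Continuous fun x : ℝ => hBOZK α (ξ - x, μ - μ₂) :=
    (continuous_hBOZK hα).comp (by continuity)
  have hmJ₁ : MeasurableSet J₁ :=
    (measurableSet_le measurable_id measurable_const).inter
      ((measurableSet_le hcont1.measurable measurable_const).inter
        (measurableSet_le measurable_const hcont2.measurable))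
  have hmJ₂ : MeasurableSet J₂ :=
    (measurableSet_le measurable_const measurable_id).inter
      ((measurableSet_le hcont1.measurable measurable_const).inter
        (measurableSet_le measurable_const hcont2.measurable))
  have hmA : MeasurableSet A := by
    apply MeasurableSet.inter
    · exact (measurableSet_DeltaSet hα).preimage
        (by continuity : Continuous fun x : ℝ => (ξ - x, μ - μ₂)).measurable
    · exact (measurableSet_DeltaSet hα).preimage
        (by continuity : Continuous fun x : ℝ => (x, μ₂)).measurable
  have hsub : A ⊆ J₁ ∪ J₂ := by
    intro x hx
    have h1 : H₁ / 2 ≤ hBOZK α (ξ - x, μ - μ₂) := le_hBOZK_of_mem hα hH₁ne hx.1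
    have h2 : hBOZK α (x, μ₂) ≤ 2 * H₂ := hBOZK_le_of_mem hα hH₂ hx.2
    rcases le_total x ξ with h | h
    · exact Or.inl ⟨h, h2, h1⟩
    · exact Or.inr ⟨h, h2, h1⟩
  have hlb : ∀ J ∈ [J₁, J₂], ∀ x ∈ J, H₁ / 4 ≤ dΨ x := by
    intro J hJ x hx
    fin_cases hJ <;>
    · obtain ⟨-, h2, h1⟩ := hx
      simp only [hdΨdef]
      linarith
  have hc : (0:ℝ) < H₁ / 4 := by linarith
  have hb1 : ∫⁻ x in A ∩ J₁, G (Ψ x) ≤ ENNReal.ofReal (4 / H₁) * ∫⁻ τ, G τ := by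
    have := oneD hd (convex_J1 (H₂ := H₂) hα ξ μ μ₂) (hmA.inter hmJ₁)
      inter_subset_right hc (hlb J₁ (by simp)) G
    rwa [show (1:ℝ) / (H₁ / 4) = 4 / H₁ by field_simp] at this
  have hb2 : ∫⁻ x in A ∩ J₂, G (Ψ x) ≤ ENNReal.ofReal (4 / H₁) * ∫⁻ τ, G τ := by
    have := oneD hd (convex_J2 (H₂ := H₂) hα ξ μ μ₂) (hmA.inter hmJ₂)
      inter_subset_right hc (hlb J₂ (by simp)) G
    rwa [show (1:ℝ) / (H₁ / 4) = 4 / H₁ by field_simp] at this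
  calc ∫⁻ x in A, G (Ψ x) = ∫⁻ x in (A ∩ J₁) ∪ (A ∩ J₂), G (Ψ x) := by
        rw [← inter_union_distrib_left, inter_eq_self_of_subset_left hsub]
    _ ≤ (∫⁻ x in A ∩ J₁, G (Ψ x)) + ∫⁻ x in A ∩ J₂, G (Ψ x) :=
        lintegral_union_le _ _ _
    _ ≤ ENNReal.ofReal (4 / H₁) * (∫⁻ τ, G τ) + ENNReal.ofReal (4 / H₁) * ∫⁻ τ, G τ :=
        add_le_add hb1 hb2
    _ = ENNReal.ofReal (8 / H₁) * ∫⁻ τ, G τ := by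
        rw [← add_mul, ← ENNReal.ofReal_add (by positivity) (by positivity)]
        norm_num
        ring_nf

lemma continuous_omegaBOZK {α : ℝ} (hα : 1 ≤ α) : Continuous (omegaBOZK α) := by
  apply Continuous.mul continuous_fst
  exact ((continuous_fst.abs).rpow_const (fun x => Or.inr (by linarith))).add
    (continuous_snd.pow 2)

lemma continuous_T {α : ℝ} (hα : 1 ≤ α) :
    Continuous (fun q : (ℝ × ℝ) × (ℝ × ℝ) => (OmegaRes α q.1 q.2, q.1 + q.2)) := by
  unfold OmegaRes
  have h := continuous_omegaBOZK hα
  apply Continuous.prodMk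
  · exact ((h.comp (continuous_fst.add continuous_snd)).sub
      (h.comp continuous_fst)).sub (h.comp continuous_snd)
  · exact continuous_fst.add continuous_snd

lemma key {α H₁ H₂ : ℝ} (hα : 1 ≤ α) (hH₂ : 1 ≤ H₂) (hk : 8 * H₂ ≤ H₁)
    (G : ℝ × ℝ × ℝ → ℝ≥0∞) (hG : Measurable G) :
    ∫⁻ q : (ℝ × ℝ) × (ℝ × ℝ),
        (DeltaSet α H₁).indicator 1 q.1 * (DeltaSet α H₂).indicator 1 q.2
          * G (OmegaRes α q.1 q.2, q.1 + q.2)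
      ≤ ENNReal.ofReal (16 * Real.sqrt (2 * H₂) / H₁) * ∫⁻ z, G z := by
  have hH₁0 : (0:ℝ) < H₁ := by linarith
  set Φ : (ℝ × ℝ) × (ℝ × ℝ) → ℝ≥0∞ := fun q =>
    (DeltaSet α H₁).indicator 1 q.1 * (DeltaSet α H₂).indicator 1 q.2
      * G (OmegaRes α q.1 q.2, q.1 + q.2) with hΦdef
  have hmΔ₁ : MeasurableSet (DeltaSet α H₁) := measurableSet_DeltaSet hα
  have hmΔ₂ : MeasurableSet (DeltaSet α H₂) := measurableSet_DeltaSet hα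
  have hΦ : Measurable Φ := by
    apply Measurable.mul
    apply Measurable.mul
    · exact (measurable_const.indicator hmΔ₁).comp measurable_fst
    · exact (measurable_const.indicator hmΔ₂).comp measurable_snd
    · exact hG.comp (continuous_T hα).measurable
  set Θ : (ℝ × ℝ) × (ℝ × ℝ) → ℝ≥0∞ := fun p => Φ (p.2 - p.1, p.1) with hΘdef
  have hΘ : Measurable Θ :=
    hΦ.comp ((measurable_snd.sub measurable_fst).prodMk measurable_fst)
  have step1 : ∫⁻ q, Φ q = ∫⁻ p : (ℝ × ℝ) × (ℝ × ℝ), Θ p := by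
    rw [Measure.volume_eq_prod, lintegral_prod_symm' Φ hΦ, Measure.volume_eq_prod,
      lintegral_prod Θ hΘ.aemeasurable]
    congr 1
    ext ζ₂
    have := lintegral_add_right_eq_self (μ := (volume : Measure (ℝ × ℝ)))
      (fun ζ => Φ (ζ - ζ₂, ζ₂)) ζ₂
    simp only [add_sub_cancel_right] at this
    exact this
  rw [step1, Measure.volume_eq_prod, lintegral_prod_symm Θ hΘ.aemeasurable]
  -- now : ∫⁻ ζ, ∫⁻ ζ₂, Θ (ζ₂, ζ)
  have inner : ∀ ζ : ℝ × ℝ, (∫⁻ ζ₂, Θ (ζ₂, ζ))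
      ≤ ENNReal.ofReal (16 * Real.sqrt (2 * H₂) / H₁) * ∫⁻ τ, G (τ, ζ) := by
    intro ζ
    have hsec : Measurable (fun ζ₂ : ℝ × ℝ => Θ (ζ₂, ζ)) :=
      hΘ.comp measurable_prodMk_right
    rw [Measure.volume_eq_prod (α := ℝ) (β := ℝ), lintegral_prod_symm' _ hsec]
    -- ∫⁻ μ₂, ∫⁻ ξ₂, Θ ((ξ₂, μ₂), ζ)
    have hin : ∀ μ₂ : ℝ, (∫⁻ ξ₂, Θ ((ξ₂, μ₂), ζ))
        ≤ (Icc (-Real.sqrt (2 * H₂)) (Real.sqrt (2 * H₂))).indicator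
            (fun _ => ENNReal.ofReal (8 / H₁) * ∫⁻ τ, G (τ, ζ)) μ₂ := by
      intro μ₂
      set A := {x : ℝ | (ζ.1 - x, ζ.2 - μ₂) ∈ DeltaSet α H₁ ∧
        (x, μ₂) ∈ DeltaSet α H₂} with hAdef
      have hmA : MeasurableSet A := by
        apply MeasurableSet.inter
        · exact hmΔ₁.preimage
            (by continuity : Continuous fun x : ℝ => (ζ.1 - x, ζ.2 - μ₂)).measurable
        · exact hmΔ₂.preimage
            (by continuity : Continuous fun x : ℝ => (x, μ₂)).measurable
      have heq : (fun ξ₂ : ℝ => Θ ((ξ₂, μ₂), ζ)) = A.indicator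
          (fun x => G (omegaBOZK α (ζ.1, ζ.2) - omegaBOZK α (ζ.1 - x, ζ.2 - μ₂)
            - omegaBOZK α (x, μ₂), ζ)) := by
        ext x
        have hζsub : ζ - (x, μ₂) = (ζ.1 - x, ζ.2 - μ₂) := rfl
        have hζadd : (ζ.1 - x, ζ.2 - μ₂) + (x, μ₂) = (ζ.1, ζ.2) := by
          simp [Prod.ext_iff]
        by_cases hx : x ∈ A
        · rw [indicator_of_mem hx]
          simp only [hΘdef, hΦdef, hζsub, OmegaRes, hζadd,
            indicator_of_mem hx.1, indicator_of_mem hx.2]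
          simp
        · rw [indicator_of_notMem hx]
          simp only [hΘdef, hΦdef, hζsub]
          rcases not_and_or.mp hx with h | h
          · rw [indicator_of_notMem h]; simp
          · rw [indicator_of_notMem h]; simp
      rw [heq, lintegral_indicator hmA]
      exact innerbound hα hH₂ hk ζ.1 ζ.2 μ₂ (fun τ => G (τ, ζ))
    calc (∫⁻ μ₂, ∫⁻ ξ₂, Θ ((ξ₂, μ₂), ζ))
        ≤ ∫⁻ μ₂, (Icc (-Real.sqrt (2 * H₂)) (Real.sqrt (2 * H₂))).indicator
            (fun _ => ENNReal.ofReal (8 / H₁) * ∫⁻ τ, G (τ, ζ)) μ₂ :=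
          lintegral_mono hin
      _ = (ENNReal.ofReal (8 / H₁) * ∫⁻ τ, G (τ, ζ))
            * volume (Icc (-Real.sqrt (2 * H₂)) (Real.sqrt (2 * H₂))) :=
          lintegral_indicator_const measurableSet_Icc _
      _ ≤ ENNReal.ofReal (16 * Real.sqrt (2 * H₂) / H₁) * ∫⁻ τ, G (τ, ζ) := by
          rw [Real.volume_Icc]
          have h2 : Real.sqrt (2 * H₂) - -Real.sqrt (2 * H₂)
              = 2 * Real.sqrt (2 * H₂) := by ring
          rw [h2, mul_comm, ← mul_assoc, ← ENNReal.ofReal_mul (by positivity)]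
          apply mul_le_mul_left
          apply ENNReal.ofReal_le_ofReal
          rw [le_div_iff₀ hH₁0]
          field_simp
          ring_nf
          exact le_refl _
  calc (∫⁻ ζ, ∫⁻ ζ₂, Θ (ζ₂, ζ))
      ≤ ∫⁻ ζ, ENNReal.ofReal (16 * Real.sqrt (2 * H₂) / H₁) * ∫⁻ τ, G (τ, ζ) :=
        lintegral_mono inner
    _ = ENNReal.ofReal (16 * Real.sqrt (2 * H₂) / H₁) * ∫⁻ ζ, ∫⁻ τ, G (τ, ζ) :=
        lintegral_const_mul' _ _ ENNReal.ofReal_ne_top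
    _ = ENNReal.ofReal (16 * Real.sqrt (2 * H₂) / H₁) * ∫⁻ z, G z := by
        rw [Measure.volume_eq_prod (α := ℝ) (β := ℝ × ℝ), lintegral_prod_symm G hG.aemeasurable]

lemma one_le_of_isDyadic {x : ℝ} (h : IsDyadic x) : 1 ≤ x := by
  obtain ⟨k, rfl⟩ := h
  exact one_le_pow₀ (by norm_num)

theorem stmt9 (α : ℝ) (hα : α ∈ Icc (1:ℝ) 2) :
    ∃ C > (0:ℝ), ∃ k₀ : ℕ, ∀ H₁ H₂ : ℝ, IsDyadic H₁ → IsDyadic H₂ →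
      (2:ℝ) ^ k₀ * H₂ ≤ H₁ →
      ∀ g₁ g₂ : ℝ × ℝ → ℝ, ∀ g : ℝ × ℝ × ℝ → ℝ,
      MemLp g₁ 2 volume → MemLp g₂ 2 volume → MemLp g 2 volume →
      (∀ ζ, 0 ≤ g₁ ζ) → (∀ ζ, 0 ≤ g₂ ζ) → (∀ z, 0 ≤ g z) →
      support g₁ ⊆ DeltaSet α H₁ → support g₂ ⊆ DeltaSet α H₂ →
      (∫ q : (ℝ × ℝ) × (ℝ × ℝ), g₁ q.1 * g₂ q.2 * g (OmegaRes α q.1 q.2, q.1 + q.2)) ≤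
        C * H₁ ^ (-(1:ℝ) / 2) * H₂ ^ ((1:ℝ) / 4)
          * (eLpNorm g₁ 2 volume).toReal * (eLpNorm g₂ 2 volume).toReal
          * (eLpNorm g 2 volume).toReal := by
  obtain ⟨hα1, hα2⟩ := hα
  refine ⟨6, by norm_num, 3, ?_⟩
  intro H₁ H₂ hd₁ hd₂ hk g₁ g₂ g hm₁ hm₂ hm hp₁ hp₂ hp hs₁ hs₂
  have hH₂1 : 1 ≤ H₂ := one_le_of_isDyadic hd₂
  have hk8 : 8 * H₂ ≤ H₁ := by norm_num at hk; linarith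
  have hH₁0 : (0:ℝ) < H₁ := by linarith
  have hH₂0 : (0:ℝ) < H₂ := by linarith
  set T : (ℝ × ℝ) × (ℝ × ℝ) → ℝ × ℝ × ℝ :=
    fun q => (OmegaRes α q.1 q.2, q.1 + q.2) with hTdef
  set F : (ℝ × ℝ) × (ℝ × ℝ) → ℝ := fun q => g₁ q.1 * g₂ q.2 * g (T q) with hFdef
  have hFnn : ∀ q, 0 ≤ F q := fun q =>
    mul_nonneg (mul_nonneg (hp₁ _) (hp₂ _)) (hp _)
  set y : ℝ := 6 * H₁ ^ (-(1:ℝ) / 2) * H₂ ^ ((1:ℝ) / 4) with hydef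
  have hy0 : 0 ≤ y := by
    have := Real.rpow_nonneg hH₁0.le (-(1:ℝ)/2)
    have := Real.rpow_nonneg hH₂0.le ((1:ℝ)/4)
    positivity
  set N₁ := eLpNorm g₁ 2 volume
  set N₂ := eLpNorm g₂ 2 volume
  set N₃ := eLpNorm g 2 volume
  have hRHSnn : 0 ≤ y * N₁.toReal * N₂.toReal * N₃.toReal := by positivity
  show (∫ q, F q) ≤ y * N₁.toReal * N₂.toReal * N₃.toReal
  by_cases hInt : Integrable F volume
  swap
  · rw [integral_undef hInt]; exact hRHSnn
  rw [integral_eq_lintegral_of_nonneg_ae (Filter.Eventually.of_forall hFnn)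
    hInt.aestronglyMeasurable]
  -- measurable representatives
  have ha₁ := hm₁.aestronglyMeasurable.aemeasurable
  have ha₂ := hm₂.aestronglyMeasurable.aemeasurable
  have ha := hm.aestronglyMeasurable.aemeasurable
  set g₁' := ha₁.mk g₁ with hg₁'def
  set g₂' := ha₂.mk g₂ with hg₂'def
  set g' := ha.mk g with hg'def
  have hg₁'m : Measurable g₁' := ha₁.measurable_mk
  have hg₂'m : Measurable g₂' := ha₂.measurable_mk
  have hg'm : Measurable g' := ha.measurable_mk
  have hg₁e : g₁ =ᵐ[volume] g₁' := ha₁.ae_eq_mk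
  have hg₂e : g₂ =ᵐ[volume] g₂' := ha₂.ae_eq_mk
  have hge : g =ᵐ[volume] g' := ha.ae_eq_mk
  -- null set control for g
  obtain ⟨N, hNsub, hNmeas, hNnull⟩ :=
    exists_measurable_superset_of_null (ae_iff.mp hge)
  have hmΔ₁ : MeasurableSet (DeltaSet α H₁) := measurableSet_DeltaSet hα1
  have hmΔ₂ : MeasurableSet (DeltaSet α H₂) := measurableSet_DeltaSet hα1
  -- a.e. q, if q ∈ Δ₁ × Δ₂ then T q ∉ N
  have haeN : ∀ᵐ q : (ℝ × ℝ) × (ℝ × ℝ), q.1 ∈ DeltaSet α H₁ → q.2 ∈ DeltaSet α H₂ →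
      T q ∉ N := by
    have hkey0 := key hα1 hH₂1 hk8 (N.indicator 1)
      (measurable_const.indicator hNmeas)
    rw [lintegral_indicator_one hNmeas, hNnull, mul_zero] at hkey0
    have hzero : (∫⁻ q : (ℝ × ℝ) × (ℝ × ℝ),
        (DeltaSet α H₁).indicator 1 q.1 * (DeltaSet α H₂).indicator 1 q.2
          * N.indicator 1 (T q)) = 0 := le_antisymm hkey0 zero_le
    have hmeas : Measurable (fun q : (ℝ × ℝ) × (ℝ × ℝ) =>
        (DeltaSet α H₁).indicator 1 q.1 * (DeltaSet α H₂).indicator 1 q.2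
          * N.indicator (1 : ℝ × ℝ × ℝ → ℝ≥0∞) (T q)) := by
      apply Measurable.mul
      apply Measurable.mul
      · exact (measurable_const.indicator hmΔ₁).comp measurable_fst
      · exact (measurable_const.indicator hmΔ₂).comp measurable_snd
      · exact (measurable_const.indicator hNmeas).comp (continuous_T hα1).measurable
    have := (lintegral_eq_zero_iff hmeas).mp hzero
    filter_upwards [this] with q hq h1 h2
    intro hTN
    rw [indicator_of_mem h1, indicator_of_mem h2, indicator_of_mem hTN] at hq
    simp at hq
  -- a.e. equality of representatives composed with projections
  have hae₁ : ∀ᵐ q : (ℝ × ℝ) × (ℝ × ℝ), g₁ q.1 = g₁' q.1 := by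
    obtain ⟨N₁', hsub, hmeas, hnull⟩ :=
      exists_measurable_superset_of_null (ae_iff.mp hg₁e)
    rw [ae_iff]
    apply measure_mono_null (t := N₁' ×ˢ (univ : Set (ℝ × ℝ)))
      (fun q hq => ⟨hsub hq, mem_univ _⟩)
    rw [Measure.volume_eq_prod, Measure.prod_prod, hnull, zero_mul]
  have hae₂ : ∀ᵐ q : (ℝ × ℝ) × (ℝ × ℝ), g₂ q.2 = g₂' q.2 := by
    obtain ⟨N₂', hsub, hmeas, hnull⟩ :=
      exists_measurable_superset_of_null (ae_iff.mp hg₂e)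
    rw [ae_iff]
    apply measure_mono_null (t := (univ : Set (ℝ × ℝ)) ×ˢ N₂')
      (fun q hq => ⟨mem_univ _, hsub hq⟩)
    rw [Measure.volume_eq_prod, Measure.prod_prod, hnull, mul_zero]
  -- the two Hölder factors
  set P : (ℝ × ℝ) × (ℝ × ℝ) → ℝ≥0∞ := fun q =>
    ((DeltaSet α H₁).indicator 1 q.1 * ENNReal.ofReal (g₁' q.1))
      * ((DeltaSet α H₂).indicator 1 q.2 * ENNReal.ofReal (g₂' q.2)) with hPdef
  set V : (ℝ × ℝ) × (ℝ × ℝ) → ℝ≥0∞ := fun q =>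
    (DeltaSet α H₁).indicator 1 q.1 * (DeltaSet α H₂).indicator 1 q.2
      * ENNReal.ofReal (g' (T q)) with hVdef
  have hPm : Measurable P := by
    apply Measurable.mul <;> apply Measurable.mul
    · exact (measurable_const.indicator hmΔ₁).comp measurable_fst
    · exact (ENNReal.measurable_ofReal.comp hg₁'m).comp measurable_fst
    · exact (measurable_const.indicator hmΔ₂).comp measurable_snd
    · exact (ENNReal.measurable_ofReal.comp hg₂'m).comp measurable_snd
  have hVm : Measurable V := by
    apply Measurable.mul
    apply Measurable.mul
    · exact (measurable_const.indicator hmΔ₁).comp measurable_fst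
    · exact (measurable_const.indicator hmΔ₂).comp measurable_snd
    · exact (ENNReal.measurable_ofReal.comp hg'm).comp (continuous_T hα1).measurable
  have haeq : (fun q => ENNReal.ofReal (F q)) =ᵐ[volume] fun q => P q * V q := by
    filter_upwards [haeN, hae₁, hae₂] with q hN1 h1 h2
    by_cases hq1 : q.1 ∈ DeltaSet α H₁
    · by_cases hq2 : q.2 ∈ DeltaSet α H₂
      · have hTq : T q ∉ N := hN1 hq1 hq2
        have hgT : g (T q) = g' (T q) := by
          by_contra hne
          exact hTq (hNsub hne)
        simp only [hFdef, hPdef, hVdef, indicator_of_mem hq1, indicator_of_mem hq2,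
          Pi.one_apply, one_mul, ← h1, ← h2, ← hgT]
        rw [ENNReal.ofReal_mul (mul_nonneg (hp₁ _) (hp₂ _)),
          ENNReal.ofReal_mul (hp₁ _)]
        try ring
      · have hz : g₂ q.2 = 0 := by
          by_contra hne
          exact hq2 (hs₂ hne)
        simp [hFdef, hPdef, hVdef, indicator_of_notMem hq2, hz, ← h2]
    · have hz : g₁ q.1 = 0 := by
        by_contra hne
        exact hq1 (hs₁ hne)
      simp [hFdef, hPdef, hVdef, indicator_of_notMem hq1, hz, ← h1]
  -- squared norm identities
  have hN₁fin : N₁ ≠ ⊤ := hm₁.2.ne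
  have hN₂fin : N₂ ≠ ⊤ := hm₂.2.ne
  have hN₃fin : N₃ ≠ ⊤ := hm.2.ne
  have hsq₁ : (∫⁻ x : ℝ × ℝ, ENNReal.ofReal (g₁' x) ^ (2:ℝ)) = N₁ ^ (2:ℝ) := by
    have he : (fun x : ℝ × ℝ => ENNReal.ofReal (g₁' x) ^ (2:ℝ))
        =ᵐ[volume] fun x => ‖g₁ x‖ₑ ^ (2:ℝ) := by
      filter_upwards [hg₁e] with x hx
      rw [← hx, Real.enorm_eq_ofReal (hp₁ x)]
    rw [lintegral_congr_ae he]
    rw [show N₁ = eLpNorm g₁ 2 volume from rfl,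
      eLpNorm_eq_lintegral_rpow_enorm_toReal two_ne_zero ENNReal.ofNat_ne_top,
      ← ENNReal.rpow_mul]
    norm_num
  have hsq₂ : (∫⁻ x : ℝ × ℝ, ENNReal.ofReal (g₂' x) ^ (2:ℝ)) = N₂ ^ (2:ℝ) := by
    have he : (fun x : ℝ × ℝ => ENNReal.ofReal (g₂' x) ^ (2:ℝ))
        =ᵐ[volume] fun x => ‖g₂ x‖ₑ ^ (2:ℝ) := by
      filter_upwards [hg₂e] with x hx
      rw [← hx, Real.enorm_eq_ofReal (hp₂ x)]
    rw [lintegral_congr_ae he]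
    rw [show N₂ = eLpNorm g₂ 2 volume from rfl,
      eLpNorm_eq_lintegral_rpow_enorm_toReal two_ne_zero ENNReal.ofNat_ne_top,
      ← ENNReal.rpow_mul]
    norm_num
  have hsq₃ : (∫⁻ z : ℝ × ℝ × ℝ, ENNReal.ofReal (g' z) ^ (2:ℝ)) = N₃ ^ (2:ℝ) := by
    have he : (fun z : ℝ × ℝ × ℝ => ENNReal.ofReal (g' z) ^ (2:ℝ))
        =ᵐ[volume] fun z => ‖g z‖ₑ ^ (2:ℝ) := by
      filter_upwards [hge] with z hz
      rw [← hz, Real.enorm_eq_ofReal (hp z)]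
    rw [lintegral_congr_ae he]
    rw [show N₃ = eLpNorm g 2 volume from rfl,
      eLpNorm_eq_lintegral_rpow_enorm_toReal two_ne_zero ENNReal.ofNat_ne_top,
      ← ENNReal.rpow_mul]
    norm_num
  -- Hölder
  have hconj : Real.HolderConjugate 2 2 := Real.HolderConjugate.two_two
  have hHolder := ENNReal.lintegral_mul_le_Lp_mul_Lq
    (volume : Measure ((ℝ × ℝ) × (ℝ × ℝ))) hconj hPm.aemeasurable hVm.aemeasurable
  -- bound the P factor
  have hB₁ : (∫⁻ q, P q ^ (2:ℝ)) ≤ N₁ ^ (2:ℝ) * N₂ ^ (2:ℝ) := by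
    have hstep : (∫⁻ q, P q ^ (2:ℝ)) = (∫⁻ x : ℝ × ℝ,
          ((DeltaSet α H₁).indicator 1 x * ENNReal.ofReal (g₁' x)) ^ (2:ℝ))
        * ∫⁻ x : ℝ × ℝ,
          ((DeltaSet α H₂).indicator 1 x * ENNReal.ofReal (g₂' x)) ^ (2:ℝ) := by
      rw [Measure.volume_eq_prod, ← lintegral_prod_mul]
      · apply lintegral_congr
        intro q
        rw [← ENNReal.mul_rpow_of_nonneg _ _ (by norm_num : (0:ℝ) ≤ 2)]
      · exact (((measurable_const.indicator hmΔ₁).mul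
          (ENNReal.measurable_ofReal.comp hg₁'m)).pow_const _).aemeasurable
      · exact (((measurable_const.indicator hmΔ₂).mul
          (ENNReal.measurable_ofReal.comp hg₂'m)).pow_const _).aemeasurable
    rw [hstep, ← hsq₁, ← hsq₂]
    have hind : ∀ (S : Set (ℝ × ℝ)) (v : ℝ≥0∞) (x : ℝ × ℝ),
        S.indicator 1 x * v ≤ v := by
      intro S v x
      by_cases hx : x ∈ S
      · rw [indicator_of_mem hx]; simp
      · rw [indicator_of_notMem hx]; simp
    apply mul_le_mul'
    · apply lintegral_mono
      intro x
      exact ENNReal.rpow_le_rpow (hind _ _ x) (by norm_num)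
    · apply lintegral_mono
      intro x
      exact ENNReal.rpow_le_rpow (hind _ _ x) (by norm_num)
  -- bound the V factor using the key lemma
  set S : ℝ := 16 * Real.sqrt (2 * H₂) / H₁ with hSdef
  have hS0 : 0 ≤ S := by positivity
  have hB₂ : (∫⁻ q, V q ^ (2:ℝ)) ≤ ENNReal.ofReal S * N₃ ^ (2:ℝ) := by
    have hpt : ∀ q : (ℝ × ℝ) × (ℝ × ℝ), V q ^ (2:ℝ)
        = (DeltaSet α H₁).indicator 1 q.1 * (DeltaSet α H₂).indicator 1 q.2
          * (ENNReal.ofReal (g' (T q)) ^ (2:ℝ)) := by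
      intro q
      by_cases hq1 : q.1 ∈ DeltaSet α H₁
      · by_cases hq2 : q.2 ∈ DeltaSet α H₂
        · simp [hVdef, indicator_of_mem hq1, indicator_of_mem hq2]
        · simp [hVdef, indicator_of_notMem hq2,
            ENNReal.zero_rpow_of_pos (by norm_num : (0:ℝ) < 2)]
      · simp [hVdef, indicator_of_notMem hq1,
          ENNReal.zero_rpow_of_pos (by norm_num : (0:ℝ) < 2)]
    calc (∫⁻ q, V q ^ (2:ℝ))
        = ∫⁻ q : (ℝ × ℝ) × (ℝ × ℝ),
            (DeltaSet α H₁).indicator 1 q.1 * (DeltaSet α H₂).indicator 1 q.2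
              * (ENNReal.ofReal (g' (T q)) ^ (2:ℝ)) := lintegral_congr hpt
      _ ≤ ENNReal.ofReal S * ∫⁻ z, ENNReal.ofReal (g' z) ^ (2:ℝ) :=
          key hα1 hH₂1 hk8 (fun z => ENNReal.ofReal (g' z) ^ (2:ℝ))
            ((ENNReal.measurable_ofReal.comp hg'm).pow_const _)
      _ = ENNReal.ofReal S * N₃ ^ (2:ℝ) := by rw [hsq₃]
  -- scalar inequality
  have hscal : ENNReal.ofReal S ^ ((1:ℝ)/2) ≤ ENNReal.ofReal y := by
    have hSy : S ≤ y ^ 2 := by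
      have hy2 : y ^ 2 = 36 * (H₂ ^ ((1:ℝ)/2)) / H₁ := by
        rw [hydef]
        rw [mul_pow, mul_pow, ← Real.rpow_natCast (H₁ ^ (-(1:ℝ)/2)) 2,
          ← Real.rpow_natCast (H₂ ^ ((1:ℝ)/4)) 2,
          ← Real.rpow_mul hH₁0.le, ← Real.rpow_mul hH₂0.le]
        norm_num
        rw [Real.rpow_neg_one]
        ring
      rw [hy2, hSdef]
      rw [div_le_div_iff_of_pos_right hH₁0]
      have h1 : Real.sqrt (2 * H₂) = Real.sqrt 2 * Real.sqrt H₂ :=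
        Real.sqrt_mul (by norm_num) _
      have h2 : Real.sqrt H₂ = H₂ ^ ((1:ℝ)/2) := Real.sqrt_eq_rpow H₂
      have h3 : Real.sqrt 2 ≤ 1.5 := by
        rw [show (1.5:ℝ) = Real.sqrt (1.5 ^ 2) from (Real.sqrt_sq (by norm_num)).symm]
        exact Real.sqrt_le_sqrt (by norm_num)
      have h4 : 0 ≤ H₂ ^ ((1:ℝ)/2) := Real.rpow_nonneg hH₂0.le _
      rw [h1, h2]
      nlinarith
    calc ENNReal.ofReal S ^ ((1:ℝ)/2) = ENNReal.ofReal (S ^ ((1:ℝ)/2)) :=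
          ENNReal.ofReal_rpow_of_nonneg hS0 (by norm_num)
      _ ≤ ENNReal.ofReal ((y ^ 2) ^ ((1:ℝ)/2)) :=
          ENNReal.ofReal_le_ofReal
            (Real.rpow_le_rpow hS0 hSy (by norm_num))
      _ = ENNReal.ofReal y := by
          rw [← Real.rpow_natCast y 2, ← Real.rpow_mul hy0]
          norm_num
  -- combine
  have hmain : (∫⁻ q, ENNReal.ofReal (F q)) ≤ ENNReal.ofReal y * N₁ * N₂ * N₃ := by
    calc (∫⁻ q, ENNReal.ofReal (F q)) = ∫⁻ q, P q * V q := lintegral_congr_ae haeq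
      _ = ∫⁻ q, (P * V) q := by simp [Pi.mul_apply]
      _ ≤ (∫⁻ q, P q ^ (2:ℝ)) ^ ((1:ℝ)/2) * (∫⁻ q, V q ^ (2:ℝ)) ^ ((1:ℝ)/2) := by
          simpa using hHolder
      _ ≤ (N₁ ^ (2:ℝ) * N₂ ^ (2:ℝ)) ^ ((1:ℝ)/2)
            * (ENNReal.ofReal S * N₃ ^ (2:ℝ)) ^ ((1:ℝ)/2) :=
          mul_le_mul' (ENNReal.rpow_le_rpow hB₁ (by norm_num))
            (ENNReal.rpow_le_rpow hB₂ (by norm_num))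
      _ = (N₁ * N₂) * (ENNReal.ofReal S ^ ((1:ℝ)/2) * N₃) := by
          rw [ENNReal.mul_rpow_of_nonneg _ _ (by norm_num : (0:ℝ) ≤ 1/2),
            ENNReal.mul_rpow_of_nonneg _ _ (by norm_num : (0:ℝ) ≤ 1/2),
            ← ENNReal.rpow_mul, ← ENNReal.rpow_mul, ← ENNReal.rpow_mul]
          norm_num
      _ ≤ (N₁ * N₂) * (ENNReal.ofReal y * N₃) :=
          mul_le_mul' (le_refl _) (mul_le_mul' hscal (le_refl _))
      _ = ENNReal.ofReal y * N₁ * N₂ * N₃ := by ring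
  have hfin : ENNReal.ofReal y * N₁ * N₂ * N₃ ≠ ⊤ :=
    ENNReal.mul_ne_top (ENNReal.mul_ne_top
      (ENNReal.mul_ne_top ENNReal.ofReal_ne_top hN₁fin) hN₂fin) hN₃fin
  have := ENNReal.toReal_mono hfin hmain
  rw [ENNReal.toReal_mul, ENNReal.toReal_mul, ENNReal.toReal_mul,
    ENNReal.toReal_ofReal hy0] at this
  exact this
end
end

section
/- Let α ∈ [1,2]. There is a constant C = C(α) > 0 such that for all dyadic numbers H₁, H₂, H₃, L₁, L₂, L₃ and all nonnegative functions f₁, f₂ ∈ L²(ℝ³) with f_i supported in D_{H_i,∞,L_i} for i = 1,2, one has ‖1_{D_{H₃,∞,L₃}} (f₁ ∗ f₂)‖_{L²(ℝ³)} ≤ C H_min^{1/(2α)+1/4} L_min^{1/2} ‖f₁‖_{L²} ‖f₂‖_{L²}, where ∗ is convolution on ℝ³, 1_A denotes the indicator function of a set A, H_min = min(H₁,H₂,H₃), and L_min = min(L₁,L₂,L₃). -/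
open MeasureTheory Set Function

noncomputable section

namespace BOZK

open MeasureTheory.Measure

instance negInv2 : IsNegInvariant (volume : Measure (ℝ × ℝ)) := by
  constructor
  have h := ((measurePreserving_neg (volume : Measure ℝ)).prod
    (measurePreserving_neg (volume : Measure ℝ)))
  have e : (Prod.map (fun x : ℝ => -x) (fun x : ℝ => -x)) = (fun z : ℝ × ℝ => -z) := rfl
  show Measure.neg volume = volume
  rw [Measure.neg_def, volume_eq_prod]
  simpa [e, volume_eq_prod] using h.map_eq

instance negInv3 : IsNegInvariant (volume : Measure (ℝ × ℝ × ℝ)) := by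
  constructor
  have h := ((measurePreserving_neg (volume : Measure ℝ)).prod
    (measurePreserving_neg (volume : Measure (ℝ × ℝ))))
  have e : (Prod.map (fun x : ℝ => -x) (fun z : ℝ × ℝ => -z)) = (fun z : ℝ × ℝ × ℝ => -z) := rfl
  show Measure.neg volume = volume
  rw [Measure.neg_def, volume_eq_prod]
  simpa [e, volume_eq_prod] using h.map_eq

instance addRight2 : IsAddRightInvariant (volume : Measure (ℝ × ℝ)) := by
  rw [volume_eq_prod]; infer_instance

instance addRight3 : IsAddRightInvariant (volume : Measure (ℝ × ℝ × ℝ)) := by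
  rw [volume_eq_prod]; infer_instance

instance addLeft2 : IsAddLeftInvariant (volume : Measure (ℝ × ℝ)) := by
  rw [volume_eq_prod]; infer_instance

instance addLeft3 : IsAddLeftInvariant (volume : Measure (ℝ × ℝ × ℝ)) := by
  rw [volume_eq_prod]; infer_instance

variable {α : ℝ}

lemma measurable_abs_rpow (hα : 1 ≤ α) : Measurable fun x : ℝ => |x| ^ α := by
  have hc : Continuous fun y : ℝ => y ^ α := by
    rw [continuous_iff_continuousAt]
    intro y
    exact Real.continuousAt_rpow_const y α (Or.inr (by linarith))
  exact (hc.comp continuous_abs).measurable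

lemma measurable_hBOZK (hα : 1 ≤ α) : Measurable (hBOZK α) := by
  unfold hBOZK
  exact (measurable_const.mul ((measurable_abs_rpow hα).comp measurable_fst)).add
    (measurable_snd.pow measurable_const)

lemma measurable_omegaBOZK (hα : 1 ≤ α) : Measurable (omegaBOZK α) := by
  unfold omegaBOZK
  exact measurable_fst.mul (((measurable_abs_rpow hα).comp measurable_fst).add
    (measurable_snd.pow measurable_const))

lemma measurableSet_ISet (N : ℝ) : MeasurableSet (ISet N) := by
  unfold ISet
  split_ifs
  · exact measurableSet_Icc
  · exact (measurableSet_le measurable_const measurable_abs).inter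
      (measurableSet_le measurable_abs measurable_const)

lemma measurableSet_DeltaSet (hα : 1 ≤ α) (H : ℝ) : MeasurableSet (DeltaSet α H) :=
  (measurable_hBOZK hα) (measurableSet_ISet H)

lemma measurableSet_DSet (hα : 1 ≤ α) (H L : ℝ) : MeasurableSet (DSet α H L) := by
  have h1 : MeasurableSet {z : ℝ × ℝ × ℝ | z.2 ∈ DeltaSet α H} :=
    measurable_snd (measurableSet_DeltaSet hα H)
  have h2 : MeasurableSet {z : ℝ × ℝ × ℝ | |z.1 + omegaBOZK α z.2| ≤ L} :=
    measurableSet_le (measurable_fst.add ((measurable_omegaBOZK hα).comp measurable_snd)).abs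
      measurable_const
  exact h1.inter h2

/-- The shear map `(τ, ζ) ↦ (τ + g ζ, ζ)` is measure preserving. -/
lemma shear_mp {g : ℝ × ℝ → ℝ} (hg : Measurable g) :
    MeasurePreserving (fun z : ℝ × ℝ × ℝ => (z.1 + g z.2, z.2)) volume volume := by
  have hS : MeasurePreserving (fun p : (ℝ × ℝ) × ℝ => (p.1, p.2 + g p.1))
      ((volume : Measure (ℝ × ℝ)).prod (volume : Measure ℝ))
      ((volume : Measure (ℝ × ℝ)).prod (volume : Measure ℝ)) := by
    have := MeasurePreserving.skew_product (g := fun x y => y + g x)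
      (MeasurePreserving.id (volume : Measure (ℝ × ℝ)))
      (measurable_snd.add (hg.comp measurable_fst))
      (μc := (volume : Measure ℝ)) (μd := (volume : Measure ℝ))
      (Filter.Eventually.of_forall fun x => map_add_right_eq_self volume (g x))
    exact this
  have hswap1 : MeasurePreserving (Prod.swap : ℝ × ℝ × ℝ → (ℝ × ℝ) × ℝ)
      ((volume : Measure ℝ).prod (volume : Measure (ℝ × ℝ)))
      ((volume : Measure (ℝ × ℝ)).prod (volume : Measure ℝ)) := measurePreserving_swap
  have hswap2 : MeasurePreserving (Prod.swap : (ℝ × ℝ) × ℝ → ℝ × ℝ × ℝ)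
      ((volume : Measure (ℝ × ℝ)).prod (volume : Measure ℝ))
      ((volume : Measure ℝ).prod (volume : Measure (ℝ × ℝ))) := measurePreserving_swap
  have := (hswap2.comp hS).comp hswap1
  have e : ((Prod.swap ∘ fun p : (ℝ × ℝ) × ℝ => (p.1, p.2 + g p.1)) ∘ Prod.swap)
      = (fun z : ℝ × ℝ × ℝ => (z.1 + g z.2, z.2)) := rfl
  rw [e] at this
  rw [volume_eq_prod]
  exact this

end BOZK
section Part2
namespace BOZK
open MeasureTheory.Measure

variable {α : ℝ}

lemma hBOZK_nonneg (hα : 1 ≤ α) (ζ : ℝ × ℝ) : 0 ≤ hBOZK α ζ := by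
  unfold hBOZK
  have h1 : (0:ℝ) ≤ |ζ.1| ^ α := Real.rpow_nonneg (abs_nonneg _) _
  nlinarith [sq_nonneg ζ.2]

lemma hBOZK_le (hα : 1 ≤ α) {H : ℝ} (hH : 1 ≤ H) {ζ : ℝ × ℝ} (hζ : ζ ∈ DeltaSet α H) :
    hBOZK α ζ ≤ 2 * H := by
  have h := hζ
  unfold DeltaSet ISet at h
  simp only [mem_setOf_eq] at h
  split_ifs at h with h1
  · rw [h1]; simpa using h.2
  · have := h.2
    calc hBOZK α ζ ≤ |hBOZK α ζ| := le_abs_self _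
    _ ≤ 2 * H := this

lemma DeltaSet_subset (hα : α ∈ Set.Icc (1:ℝ) 2) {H : ℝ} (hH : 1 ≤ H) :
    DeltaSet α H ⊆ Set.Icc (-((2*H) ^ (1/α))) ((2*H) ^ (1/α)) ×ˢ
      Set.Icc (-((2*H) ^ ((1:ℝ)/2))) ((2*H) ^ ((1:ℝ)/2)) := by
  obtain ⟨hα1, hα2⟩ := hα
  have hαpos : (0:ℝ) < α := by linarith
  intro ζ hζ
  have hle : hBOZK α ζ ≤ 2 * H := hBOZK_le hα1 hH hζ
  have habs : (0:ℝ) ≤ |ζ.1| ^ α := Real.rpow_nonneg (abs_nonneg _) _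
  have hsq : ζ.2 ^ 2 ≤ 2 * H := by unfold hBOZK at hle; nlinarith
  have hxi : |ζ.1| ^ α ≤ 2 * H := by
    unfold hBOZK at hle
    nlinarith [sq_nonneg ζ.2]
  have h2H : (0:ℝ) < 2 * H := by linarith
  constructor
  · -- first coordinate
    have h1 : |ζ.1| ≤ (2*H) ^ (1/α) := by
      have := Real.rpow_le_rpow habs hxi (by positivity : (0:ℝ) ≤ 1/α)
      calc |ζ.1| = (|ζ.1| ^ α) ^ (1/α) := by
            rw [← Real.rpow_mul (abs_nonneg _), mul_one_div_cancel (ne_of_gt hαpos),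
              Real.rpow_one]
      _ ≤ (2*H) ^ (1/α) := this
    exact Set.mem_Icc.mpr (abs_le.mp h1)
  · have h2 : |ζ.2| ≤ (2*H) ^ ((1:ℝ)/2) := by
      rw [← Real.sqrt_eq_rpow, ← Real.sqrt_sq_eq_abs]
      exact Real.sqrt_le_sqrt hsq
    exact Set.mem_Icc.mpr (abs_le.mp h2)

end BOZK
end Part2
section Part3
namespace BOZK
open MeasureTheory.Measure

variable {α : ℝ}

lemma volume_DeltaSet_le (hα : α ∈ Set.Icc (1:ℝ) 2) {H : ℝ} (hH : 1 ≤ H) :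
    volume (DeltaSet α H) ≤ ENNReal.ofReal (16 * H ^ (1/α + 1/2)) := by
  obtain ⟨hα1, hα2⟩ := hα
  have hαpos : (0:ℝ) < α := by linarith
  have hHpos : (0:ℝ) < H := by linarith
  set a := (2*H) ^ (1/α) with ha
  set b := (2*H) ^ ((1:ℝ)/2) with hb
  have hαπ : (0:ℝ) ≤ 1/α := by positivity
  have h2H : (0:ℝ) < 2*H := by linarith
  have hapos : 0 ≤ a := Real.rpow_nonneg h2H.le _
  have hbpos : 0 ≤ b := Real.rpow_nonneg h2H.le _
  calc volume (DeltaSet α H)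
      ≤ volume (Set.Icc (-a) a ×ˢ Set.Icc (-b) b) :=
        measure_mono (DeltaSet_subset ⟨hα1, hα2⟩ hH)
    _ = volume (Set.Icc (-a) a) * volume (Set.Icc (-b) b) := by
        rw [volume_eq_prod]; exact prod_prod _ _
    _ = ENNReal.ofReal ((2*a) * (2*b)) := by
        rw [Real.volume_Icc, Real.volume_Icc, show a - -a = 2*a from by ring,
          show b - -b = 2*b from by ring, ← ENNReal.ofReal_mul (by linarith)]
    _ ≤ ENNReal.ofReal (16 * H ^ (1/α + 1/2)) := by
        apply ENNReal.ofReal_le_ofReal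
        have e1 : a = 2 ^ (1/α) * H ^ (1/α) := by
          rw [ha, Real.mul_rpow (by norm_num) hHpos.le]
        have e2 : b = 2 ^ ((1:ℝ)/2) * H ^ ((1:ℝ)/2) := by
          rw [hb, Real.mul_rpow (by norm_num) hHpos.le]
        have b1 : (2:ℝ) ^ (1/α) ≤ 2 := by
          calc (2:ℝ) ^ (1/α) ≤ 2 ^ (1:ℝ) :=
                Real.rpow_le_rpow_of_exponent_le one_le_two
                  (by rw [div_le_one hαpos]; linarith)
            _ = 2 := Real.rpow_one 2
        have b2 : (2:ℝ) ^ ((1:ℝ)/2) ≤ 2 := by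
          calc (2:ℝ) ^ ((1:ℝ)/2) ≤ 2 ^ (1:ℝ) :=
                Real.rpow_le_rpow_of_exponent_le one_le_two (by norm_num)
            _ = 2 := Real.rpow_one 2
        have hH1 : (0:ℝ) ≤ H ^ (1/α) := Real.rpow_nonneg hHpos.le _
        have hH2 : (0:ℝ) ≤ H ^ ((1:ℝ)/2) := Real.rpow_nonneg hHpos.le _
        have e3 : H ^ (1/α) * H ^ ((1:ℝ)/2) = H ^ (1/α + 1/2) :=
          (Real.rpow_add hHpos _ _).symm
        calc (2*a) * (2*b) = 4 * (2 ^ (1/α) * 2 ^ ((1:ℝ)/2)) * (H ^ (1/α) * H ^ ((1:ℝ)/2)) := by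
              rw [e1, e2]; ring
          _ ≤ 4 * (2 * 2) * (H ^ (1/α) * H ^ ((1:ℝ)/2)) := by
              apply mul_le_mul_of_nonneg_right _ (by positivity)
              have : (0:ℝ) ≤ 2 ^ (1/α) := by positivity
              nlinarith [Real.rpow_nonneg (show (0:ℝ) ≤ 2 by norm_num) ((1:ℝ)/2)]
          _ = 16 * H ^ (1/α + 1/2) := by rw [e3]; ring

/-- Key geometric bound: intersection of a `DSet` with an affine preimage of another. -/
lemma vol_inter_le (hα : α ∈ Set.Icc (1:ℝ) 2) {H L H' L' : ℝ}
    (hH : 1 ≤ H) (hH' : 1 ≤ H') (hL : 0 < L) (hL' : 0 < L')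
    {T : ℝ×ℝ×ℝ → ℝ×ℝ×ℝ} (hT : MeasurePreserving T volume volume)
    {A B : ℝ×ℝ → ℝ×ℝ} (hA : MeasurePreserving A volume volume)
    (hB : MeasurePreserving B volume volume)
    (hT2 : ∀ z, (T z).2 = A z.2) (hBA : ∀ ζ, B (A ζ) = ζ) :
    volume (DSet α H L ∩ T ⁻¹' DSet α H' L') ≤
      ENNReal.ofReal (32 * min L L' * (min H H') ^ (1/α + 1/2)) := by
  have hα1 : 1 ≤ α := hα.1
  have hΨ : MeasurePreserving (fun z : ℝ×ℝ×ℝ => (z.1 + omegaBOZK α z.2, z.2)) volume volume :=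
    shear_mp (measurable_omegaBOZK hα1)
  have hmin : min (volume (DeltaSet α H)) (volume (DeltaSet α H')) ≤
      ENNReal.ofReal (16 * (min H H') ^ (1/α + 1/2)) := by
    rcases le_total H H' with h | h
    · rw [min_eq_left h]
      exact le_trans (min_le_left _ _) (volume_DeltaSet_le hα hH)
    · rw [min_eq_right h]
      exact le_trans (min_le_right _ _) (volume_DeltaSet_le hα hH')
  have key : volume (DSet α H L ∩ T ⁻¹' DSet α H' L') ≤
      ENNReal.ofReal (2 * min L L') *
        min (volume (DeltaSet α H)) (volume (DeltaSet α H')) := by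
    rcases le_total L L' with hLL | hLL
    · rw [min_eq_left hLL]
      have hsub : DSet α H L ∩ T ⁻¹' DSet α H' L' ⊆
          (fun z : ℝ×ℝ×ℝ => (z.1 + omegaBOZK α z.2, z.2)) ⁻¹'
            (Set.Icc (-L) L ×ˢ (DeltaSet α H ∩ A ⁻¹' DeltaSet α H')) := by
        rintro z ⟨⟨hΔ, hτ⟩, hz'⟩
        refine ⟨Set.mem_Icc.mpr (abs_le.mp hτ), hΔ, ?_⟩
        have h' := hz'.1
        rw [hT2] at h'
        exact h'
      have hR : MeasurableSet (Set.Icc (-L) L ×ˢ (DeltaSet α H ∩ A ⁻¹' DeltaSet α H')) :=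
        measurableSet_Icc.prod ((measurableSet_DeltaSet hα1 H).inter
          (hA.measurable (measurableSet_DeltaSet hα1 H')))
      calc volume (DSet α H L ∩ T ⁻¹' DSet α H' L') ≤ _ := measure_mono hsub
        _ = volume (Set.Icc (-L) L ×ˢ (DeltaSet α H ∩ A ⁻¹' DeltaSet α H')) :=
            hΨ.measure_preimage hR.nullMeasurableSet
        _ = volume (Set.Icc (-L) L) * volume (DeltaSet α H ∩ A ⁻¹' DeltaSet α H') := by
            rw [volume_eq_prod]; exact prod_prod _ _
        _ ≤ ENNReal.ofReal (2 * L) *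
              min (volume (DeltaSet α H)) (volume (DeltaSet α H')) := by
            apply mul_le_mul'
            · rw [Real.volume_Icc]
              exact ENNReal.ofReal_le_ofReal (by linarith)
            · apply le_min
              · exact measure_mono Set.inter_subset_left
              · calc volume (DeltaSet α H ∩ A ⁻¹' DeltaSet α H') ≤
                    volume (A ⁻¹' DeltaSet α H') := measure_mono Set.inter_subset_right
                  _ = volume (DeltaSet α H') :=
                    hA.measure_preimage (measurableSet_DeltaSet hα1 H').nullMeasurableSet
    · rw [min_eq_right hLL]
      have hΦ : MeasurePreserving
          ((fun z : ℝ×ℝ×ℝ => (z.1 + omegaBOZK α z.2, z.2)) ∘ T) volume volume := hΨ.comp hT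
      have hsub : DSet α H L ∩ T ⁻¹' DSet α H' L' ⊆
          ((fun z : ℝ×ℝ×ℝ => (z.1 + omegaBOZK α z.2, z.2)) ∘ T) ⁻¹'
            (Set.Icc (-L') L' ×ˢ (DeltaSet α H' ∩ B ⁻¹' DeltaSet α H)) := by
        rintro z ⟨⟨hΔ, hτ⟩, hz'⟩
        obtain ⟨hΔ', hτ'⟩ := hz'
        refine ⟨Set.mem_Icc.mpr (abs_le.mp hτ'), ?_, ?_⟩
        · exact hΔ'
        · show B (T z).2 ∈ DeltaSet α H
          rw [hT2, hBA]
          exact hΔ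
      have hR : MeasurableSet (Set.Icc (-L') L' ×ˢ (DeltaSet α H' ∩ B ⁻¹' DeltaSet α H)) :=
        measurableSet_Icc.prod ((measurableSet_DeltaSet hα1 H').inter
          (hB.measurable (measurableSet_DeltaSet hα1 H)))
      calc volume (DSet α H L ∩ T ⁻¹' DSet α H' L') ≤ _ := measure_mono hsub
        _ = volume (Set.Icc (-L') L' ×ˢ (DeltaSet α H' ∩ B ⁻¹' DeltaSet α H)) :=
            hΦ.measure_preimage hR.nullMeasurableSet
        _ = volume (Set.Icc (-L') L') * volume (DeltaSet α H' ∩ B ⁻¹' DeltaSet α H) := by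
            rw [volume_eq_prod]; exact prod_prod _ _
        _ ≤ ENNReal.ofReal (2 * L') *
              min (volume (DeltaSet α H)) (volume (DeltaSet α H')) := by
            apply mul_le_mul'
            · rw [Real.volume_Icc]
              exact ENNReal.ofReal_le_ofReal (by linarith)
            · apply le_min
              · calc volume (DeltaSet α H' ∩ B ⁻¹' DeltaSet α H) ≤
                    volume (B ⁻¹' DeltaSet α H) := measure_mono Set.inter_subset_right
                  _ = volume (DeltaSet α H) :=
                    hB.measure_preimage (measurableSet_DeltaSet hα1 H).nullMeasurableSet
              · exact measure_mono Set.inter_subset_left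
  calc volume (DSet α H L ∩ T ⁻¹' DSet α H' L') ≤ _ := key
    _ ≤ ENNReal.ofReal (2 * min L L') * ENNReal.ofReal (16 * (min H H') ^ (1/α + 1/2)) :=
        mul_le_mul' le_rfl hmin
    _ = ENNReal.ofReal (32 * min L L' * (min H H') ^ (1/α + 1/2)) := by
        rw [← ENNReal.ofReal_mul (by positivity)]
        congr 1
        ring

end BOZK
end Part3
section Part4
namespace BOZK
open scoped ENNReal
open MeasureTheory.Measure

/-- Cauchy–Schwarz for lintegrals, squared form. -/
lemma lintegral_sq_le {β : Type*} [MeasurableSpace β] (μ : Measure β) {f g : β → ℝ≥0∞}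
    (hf : Measurable f) (hg : Measurable g) :
    (∫⁻ x, f x * g x ∂μ) ^ (2:ℝ) ≤ (∫⁻ x, f x ^ (2:ℝ) ∂μ) * (∫⁻ x, g x ^ (2:ℝ) ∂μ) := by
  have hpq : Real.HolderConjugate 2 2 := Real.HolderConjugate.two_two
  have h := ENNReal.lintegral_mul_le_Lp_mul_Lq μ hpq hf.aemeasurable hg.aemeasurable
  have h2 := ENNReal.rpow_le_rpow h (by norm_num : (0:ℝ) ≤ 2)
  calc (∫⁻ x, f x * g x ∂μ) ^ (2:ℝ) = (∫⁻ x, (f * g) x ∂μ) ^ (2:ℝ) := rfl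
    _ ≤ ((∫⁻ x, f x ^ (2:ℝ) ∂μ) ^ ((1:ℝ)/2) * (∫⁻ x, g x ^ (2:ℝ) ∂μ) ^ ((1:ℝ)/2)) ^ (2:ℝ) := h2
    _ = (∫⁻ x, f x ^ (2:ℝ) ∂μ) * (∫⁻ x, g x ^ (2:ℝ) ∂μ) := by
        rw [ENNReal.mul_rpow_of_nonneg _ _ (by norm_num : (0:ℝ) ≤ 2),
          ← ENNReal.rpow_mul, ← ENNReal.rpow_mul]
        norm_num

lemma indicator_one_rpow_two {β : Type*} (E : Set β) (w : β) :
    (E.indicator (fun _ => (1:ℝ≥0∞)) w) ^ (2:ℝ) = E.indicator (fun _ => (1:ℝ≥0∞)) w := by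
  by_cases h : w ∈ E
  · simp [Set.indicator_of_mem h]
  · simp [Set.indicator_of_notMem h, ENNReal.zero_rpow_of_pos (by norm_num : (0:ℝ) < 2)]

/-- Bilinear estimate, pair (1,2): uses the supports of both functions. -/
lemma pair12 {φ₁ φ₂ : ℝ×ℝ×ℝ → ℝ≥0∞} (hm₁ : Measurable φ₁) (hm₂ : Measurable φ₂)
    {S₁ S₂ : Set (ℝ×ℝ×ℝ)} (hS₁ : MeasurableSet S₁) (hS₂ : MeasurableSet S₂)
    (hsupp₁ : ∀ w, φ₁ w ≠ 0 → w ∈ S₁) (hsupp₂ : ∀ w, φ₂ w ≠ 0 → w ∈ S₂)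
    {M : ℝ≥0∞} (hM : ∀ z, volume (S₁ ∩ (fun w => z - w) ⁻¹' S₂) ≤ M) (K : Set (ℝ×ℝ×ℝ)) :
    ∫⁻ z, K.indicator (fun z' => (∫⁻ w, φ₁ w * φ₂ (z' - w)) ^ (2:ℝ)) z ≤
      M * ((∫⁻ w, φ₁ w ^ (2:ℝ)) * (∫⁻ w, φ₂ w ^ (2:ℝ))) := by
  have hsubmap : ∀ z : ℝ×ℝ×ℝ, Measurable (fun w : ℝ×ℝ×ℝ => z - w) :=
    fun z => measurable_const.sub measurable_id
  have hstep : ∀ z : ℝ×ℝ×ℝ, (∫⁻ w, φ₁ w * φ₂ (z - w)) ^ (2:ℝ) ≤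
      M * ∫⁻ w, φ₁ w ^ (2:ℝ) * φ₂ (z - w) ^ (2:ℝ) := by
    intro z
    set E : Set (ℝ×ℝ×ℝ) := S₁ ∩ (fun w => z - w) ⁻¹' S₂ with hE
    have hEm : MeasurableSet E := hS₁.inter ((hsubmap z) hS₂)
    have heq : (fun w => φ₁ w * φ₂ (z - w)) =
        fun w => E.indicator (fun _ => (1:ℝ≥0∞)) w * (φ₁ w * φ₂ (z - w)) := by
      funext w
      by_cases h : w ∈ E
      · rw [Set.indicator_of_mem h, one_mul]
      · rw [Set.indicator_of_notMem h, zero_mul]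
        rcases not_and_or.mp h with h1 | h2
        · rw [not_ne_iff.mp (fun hne => h1 (hsupp₁ w hne)), zero_mul]
        · rw [not_ne_iff.mp (fun hne => h2 (hsupp₂ _ hne)), mul_zero]
    have hmg : Measurable fun w => φ₁ w * φ₂ (z - w) :=
      hm₁.mul (hm₂.comp (hsubmap z))
    calc (∫⁻ w, φ₁ w * φ₂ (z - w)) ^ (2:ℝ)
        = (∫⁻ w, E.indicator (fun _ => (1:ℝ≥0∞)) w * (φ₁ w * φ₂ (z - w))) ^ (2:ℝ) := by
          rw [← heq]
      _ ≤ (∫⁻ w, (E.indicator (fun _ => (1:ℝ≥0∞)) w) ^ (2:ℝ)) *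
            (∫⁻ w, (φ₁ w * φ₂ (z - w)) ^ (2:ℝ)) :=
          lintegral_sq_le _ (measurable_one.indicator hEm) hmg
      _ ≤ M * ∫⁻ w, φ₁ w ^ (2:ℝ) * φ₂ (z - w) ^ (2:ℝ) := by
          apply mul_le_mul'
          · calc ∫⁻ w, (E.indicator (fun _ => (1:ℝ≥0∞)) w) ^ (2:ℝ)
                = ∫⁻ w, E.indicator (fun _ => (1:ℝ≥0∞)) w :=
                  lintegral_congr fun w => indicator_one_rpow_two E w
              _ = volume E := lintegral_indicator_one hEm
              _ ≤ M := hM z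
          · apply le_of_eq
            apply lintegral_congr
            intro w
            exact ENNReal.mul_rpow_of_nonneg _ _ (by norm_num : (0:ℝ) ≤ 2)
  calc ∫⁻ z, K.indicator (fun z' => (∫⁻ w, φ₁ w * φ₂ (z' - w)) ^ (2:ℝ)) z
      ≤ ∫⁻ z, (∫⁻ w, φ₁ w * φ₂ (z - w)) ^ (2:ℝ) := by
        apply lintegral_mono
        intro z
        exact Set.indicator_le_self _ _ z
    _ ≤ ∫⁻ z, M * ∫⁻ w, φ₁ w ^ (2:ℝ) * φ₂ (z - w) ^ (2:ℝ) := lintegral_mono hstep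
    _ = M * ∫⁻ z, ∫⁻ w, φ₁ w ^ (2:ℝ) * φ₂ (z - w) ^ (2:ℝ) := by
        apply lintegral_const_mul
        apply Measurable.lintegral_prod_right (f := fun (z w : ℝ×ℝ×ℝ) => φ₁ w ^ (2:ℝ) * φ₂ (z - w) ^ (2:ℝ))
        exact ((hm₁.comp measurable_snd).pow measurable_const).mul
          ((hm₂.comp (measurable_fst.sub measurable_snd)).pow measurable_const)
    _ = M * ((∫⁻ w, φ₁ w ^ (2:ℝ)) * (∫⁻ w, φ₂ w ^ (2:ℝ))) := by
        congr 1
        rw [lintegral_lintegral_swap]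
        · have : ∀ w : ℝ×ℝ×ℝ, ∫⁻ z, φ₁ w ^ (2:ℝ) * φ₂ (z - w) ^ (2:ℝ) =
              φ₁ w ^ (2:ℝ) * ∫⁻ w', φ₂ w' ^ (2:ℝ) := by
            intro w
            have h2w : Measurable fun z : ℝ×ℝ×ℝ => φ₂ (z - w) ^ (2:ℝ) :=
              (hm₂.comp (measurable_id.sub measurable_const)).pow measurable_const
            rw [lintegral_const_mul _ h2w]
            congr 1
            exact (measurePreserving_sub_right volume w).lintegral_comp
              (f := fun u => φ₂ u ^ (2:ℝ)) (hm₂.pow measurable_const)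
          rw [lintegral_congr this]
          exact lintegral_mul_const _ (hm₁.pow measurable_const)
        · apply Measurable.aemeasurable
          exact ((hm₁.comp measurable_snd).pow measurable_const).mul
            ((hm₂.comp (measurable_fst.sub measurable_snd)).pow measurable_const)

/-- Bilinear estimate, pair involving the indicator set `K` and the support of `φ₂`. -/
lemma pairK {φ₁ φ₂ : ℝ×ℝ×ℝ → ℝ≥0∞} (hm₁ : Measurable φ₁) (hm₂ : Measurable φ₂)
    {S₂ K : Set (ℝ×ℝ×ℝ)} (hS₂ : MeasurableSet S₂) (hK : MeasurableSet K)
    (hsupp₂ : ∀ w, φ₂ w ≠ 0 → w ∈ S₂)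
    {M : ℝ≥0∞} (hM : ∀ w, volume (K ∩ (fun z => z - w) ⁻¹' S₂) ≤ M) :
    ∫⁻ z, K.indicator (fun z' => (∫⁻ w, φ₁ w * φ₂ (z' - w)) ^ (2:ℝ)) z ≤
      M * ((∫⁻ w, φ₁ w ^ (2:ℝ)) * (∫⁻ w, φ₂ w ^ (2:ℝ))) := by
  have hsubmap : ∀ z : ℝ×ℝ×ℝ, Measurable (fun w : ℝ×ℝ×ℝ => z - w) :=
    fun z => measurable_const.sub measurable_id
  set c := ∫⁻ w, φ₂ w ^ (2:ℝ) with hc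
  set J : ℝ×ℝ×ℝ → ℝ≥0∞ := fun z => ∫⁻ w, φ₁ w ^ (2:ℝ) * S₂.indicator (fun _ => (1:ℝ≥0∞)) (z - w)
    with hJ
  have hstep : ∀ z : ℝ×ℝ×ℝ, (∫⁻ w, φ₁ w * φ₂ (z - w)) ^ (2:ℝ) ≤ J z * c := by
    intro z
    have heq : (fun w => φ₁ w * φ₂ (z - w)) =
        fun w => (φ₁ w * S₂.indicator (fun _ => (1:ℝ≥0∞)) (z - w)) * φ₂ (z - w) := by
      funext w
      by_cases h : z - w ∈ S₂
      · rw [Set.indicator_of_mem h, mul_one]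
      · rw [Set.indicator_of_notMem h, mul_zero, zero_mul,
          not_ne_iff.mp (fun hne => h (hsupp₂ _ hne)), mul_zero]
    have hf : Measurable fun w => φ₁ w * S₂.indicator (fun _ => (1:ℝ≥0∞)) (z - w) :=
      hm₁.mul ((measurable_one.indicator hS₂).comp (hsubmap z))
    calc (∫⁻ w, φ₁ w * φ₂ (z - w)) ^ (2:ℝ)
        = (∫⁻ w, (φ₁ w * S₂.indicator (fun _ => (1:ℝ≥0∞)) (z - w)) * φ₂ (z - w)) ^ (2:ℝ) := by
          rw [← heq]
      _ ≤ (∫⁻ w, (φ₁ w * S₂.indicator (fun _ => (1:ℝ≥0∞)) (z - w)) ^ (2:ℝ)) *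
            (∫⁻ w, φ₂ (z - w) ^ (2:ℝ)) :=
          lintegral_sq_le _ hf (hm₂.comp (hsubmap z))
      _ = J z * c := by
          congr 1
          · apply lintegral_congr
            intro w
            rw [ENNReal.mul_rpow_of_nonneg _ _ (by norm_num : (0:ℝ) ≤ 2),
              indicator_one_rpow_two]
          · exact (measurePreserving_sub_left volume z).lintegral_comp
              (f := fun u => φ₂ u ^ (2:ℝ)) (hm₂.pow measurable_const)
  have hKpt : ∀ z, K.indicator (fun z' => (∫⁻ w, φ₁ w * φ₂ (z' - w)) ^ (2:ℝ)) z ≤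
      K.indicator (fun _ => (1:ℝ≥0∞)) z * (J z * c) := by
    intro z
    by_cases h : z ∈ K
    · rw [Set.indicator_of_mem h, Set.indicator_of_mem h, one_mul]
      exact hstep z
    · rw [Set.indicator_of_notMem h, Set.indicator_of_notMem h, zero_mul]
  have hJm : Measurable J := by
    apply Measurable.lintegral_prod_right
      (f := fun (z w : ℝ×ℝ×ℝ) => φ₁ w ^ (2:ℝ) * S₂.indicator (fun _ => (1:ℝ≥0∞)) (z - w))
    exact ((hm₁.comp measurable_snd).pow measurable_const).mul
      ((measurable_one.indicator hS₂).comp (measurable_fst.sub measurable_snd))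
  calc ∫⁻ z, K.indicator (fun z' => (∫⁻ w, φ₁ w * φ₂ (z' - w)) ^ (2:ℝ)) z
      ≤ ∫⁻ z, K.indicator (fun _ => (1:ℝ≥0∞)) z * (J z * c) := lintegral_mono hKpt
    _ = c * ∫⁻ z, K.indicator (fun _ => (1:ℝ≥0∞)) z * J z := by
        have hmeas : Measurable fun z : ℝ×ℝ×ℝ => K.indicator (fun _ => (1:ℝ≥0∞)) z * J z :=
          (measurable_const.indicator hK).mul hJm
        rw [← lintegral_const_mul c hmeas]
        apply lintegral_congr
        intro z
        ring
    _ ≤ c * (M * ∫⁻ w, φ₁ w ^ (2:ℝ)) := by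
        apply mul_le_mul' le_rfl
        have hswap : ∫⁻ z, K.indicator (fun _ => (1:ℝ≥0∞)) z * J z =
            ∫⁻ w, φ₁ w ^ (2:ℝ) *
              ∫⁻ z, K.indicator (fun _ => (1:ℝ≥0∞)) z * S₂.indicator (fun _ => (1:ℝ≥0∞)) (z - w) := by
          have h1 : ∀ z, K.indicator (fun _ => (1:ℝ≥0∞)) z * J z =
              ∫⁻ w, K.indicator (fun _ => (1:ℝ≥0∞)) z *
                (φ₁ w ^ (2:ℝ) * S₂.indicator (fun _ => (1:ℝ≥0∞)) (z - w)) := by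
            intro z
            have hmeas : Measurable fun w : ℝ×ℝ×ℝ =>
                φ₁ w ^ (2:ℝ) * S₂.indicator (fun _ => (1:ℝ≥0∞)) (z - w) :=
              (hm₁.pow measurable_const).mul
                ((measurable_const.indicator hS₂).comp (hsubmap z))
            rw [lintegral_const_mul _ hmeas]
          rw [lintegral_congr h1, lintegral_lintegral_swap]
          · apply lintegral_congr
            intro w
            have hmeas : Measurable fun z : ℝ×ℝ×ℝ =>
                K.indicator (fun _ => (1:ℝ≥0∞)) z * S₂.indicator (fun _ => (1:ℝ≥0∞)) (z - w) :=
              (measurable_const.indicator hK).mul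
                ((measurable_const.indicator hS₂).comp (measurable_id.sub measurable_const))
            rw [← lintegral_const_mul _ hmeas]
            apply lintegral_congr
            intro z
            ring
          · apply Measurable.aemeasurable
            exact ((measurable_one.indicator hK).comp measurable_fst).mul
              (((hm₁.comp measurable_snd).pow measurable_const).mul
                ((measurable_one.indicator hS₂).comp (measurable_fst.sub measurable_snd)))
        rw [hswap]
        have hinner : ∀ w : ℝ×ℝ×ℝ,
            (∫⁻ z, K.indicator (fun _ => (1:ℝ≥0∞)) z * S₂.indicator (fun _ => (1:ℝ≥0∞)) (z - w))
              ≤ M := by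
          intro w
          have heq2 : (fun z => K.indicator (fun _ => (1:ℝ≥0∞)) z *
              S₂.indicator (fun _ => (1:ℝ≥0∞)) (z - w)) =
              (K ∩ (fun z => z - w) ⁻¹' S₂).indicator (fun _ => (1:ℝ≥0∞)) := by
            funext z
            by_cases h1 : z ∈ K <;> by_cases h2 : z - w ∈ S₂ <;>
              simp [Set.indicator_apply, h1, h2, Set.mem_preimage]
          rw [heq2]
          have hset : MeasurableSet (K ∩ (fun z : ℝ×ℝ×ℝ => z - w) ⁻¹' S₂) :=
            hK.inter ((measurable_id.sub measurable_const) hS₂)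
          calc ∫⁻ z, (K ∩ (fun z : ℝ×ℝ×ℝ => z - w) ⁻¹' S₂).indicator (fun _ => (1:ℝ≥0∞)) z
              = volume (K ∩ (fun z : ℝ×ℝ×ℝ => z - w) ⁻¹' S₂) := lintegral_indicator_one hset
            _ ≤ M := hM w
        calc ∫⁻ w, φ₁ w ^ (2:ℝ) *
              ∫⁻ z, K.indicator (fun _ => (1:ℝ≥0∞)) z * S₂.indicator (fun _ => (1:ℝ≥0∞)) (z - w)
            ≤ ∫⁻ w, φ₁ w ^ (2:ℝ) * M := lintegral_mono fun w => mul_le_mul' le_rfl (hinner w)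
          _ = M * ∫⁻ w, φ₁ w ^ (2:ℝ) := by
              rw [lintegral_mul_const _ (hm₁.pow measurable_const), mul_comm]
    _ = M * ((∫⁻ w, φ₁ w ^ (2:ℝ)) * (∫⁻ w, φ₂ w ^ (2:ℝ))) := by ring

end BOZK
end Part4
section Part5
namespace BOZK
open MeasureTheory.Measure
open scoped ENNReal

lemma min3_left {a b c : ℝ} (hab : a ≤ b) (hac : a ≤ c) : min a (min b c) = a :=
  min_eq_left (le_min hab hac)

lemma pick (x₁ x₂ x₃ y₁ y₂ y₃ : ℝ) :
    (min x₁ x₂ = min x₁ (min x₂ x₃) ∧ min y₁ y₂ = min y₁ (min y₂ y₃)) ∨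
    (min x₁ x₃ = min x₁ (min x₂ x₃) ∧ min y₁ y₃ = min y₁ (min y₂ y₃)) ∨
    (min x₂ x₃ = min x₁ (min x₂ x₃) ∧ min y₂ y₃ = min y₁ (min y₂ y₃)) := by
  have tri : ∀ a b c : ℝ, (a ≤ b ∧ a ≤ c) ∨ (b ≤ a ∧ b ≤ c) ∨ (c ≤ a ∧ c ≤ b) := by
    intro a b c
    rcases le_total a b with h | h
    · rcases le_total a c with g | g
      · exact Or.inl ⟨h, g⟩
      · exact Or.inr (Or.inr ⟨g, g.trans h⟩)
    · rcases le_total b c with k | k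
      · exact Or.inr (Or.inl ⟨h, k⟩)
      · exact Or.inr (Or.inr ⟨k.trans h, k⟩)
  have m1 : ∀ {a b c : ℝ}, a ≤ b → a ≤ c → min a (min b c) = a :=
    fun hab hac => min_eq_left (le_min hab hac)
  have m2 : ∀ {a b c : ℝ}, b ≤ a → b ≤ c → min a (min b c) = b := by
    intro a b c hba hbc
    rw [min_eq_left hbc, min_eq_right hba]
  have m3 : ∀ {a b c : ℝ}, c ≤ a → c ≤ b → min a (min b c) = c := by
    intro a b c hca hcb
    rw [min_eq_right hcb, min_eq_right hca]
  rcases tri x₁ x₂ x₃ with ⟨hx1, hx2⟩ | ⟨hx1, hx2⟩ | ⟨hx1, hx2⟩ <;>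
    rcases tri y₁ y₂ y₃ with ⟨hy1, hy2⟩ | ⟨hy1, hy2⟩ | ⟨hy1, hy2⟩
  · exact Or.inl ⟨by rw [m1 hx1 hx2, min_eq_left hx1], by rw [m1 hy1 hy2, min_eq_left hy1]⟩
  · exact Or.inl ⟨by rw [m1 hx1 hx2, min_eq_left hx1], by rw [m2 hy1 hy2, min_eq_right hy1]⟩
  · exact Or.inr (Or.inl ⟨by rw [m1 hx1 hx2, min_eq_left hx2],
      by rw [m3 hy1 hy2, min_eq_right hy1]⟩)
  · exact Or.inl ⟨by rw [m2 hx1 hx2, min_eq_right hx1], by rw [m1 hy1 hy2, min_eq_left hy1]⟩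
  · exact Or.inl ⟨by rw [m2 hx1 hx2, min_eq_right hx1], by rw [m2 hy1 hy2, min_eq_right hy1]⟩
  · exact Or.inr (Or.inr ⟨by rw [m2 hx1 hx2, min_eq_left hx2],
      by rw [m3 hy1 hy2, min_eq_right hy2]⟩)
  · exact Or.inr (Or.inl ⟨by rw [m3 hx1 hx2, min_eq_right hx1],
      by rw [m1 hy1 hy2, min_eq_left hy2]⟩)
  · exact Or.inr (Or.inr ⟨by rw [m3 hx1 hx2, min_eq_right hx2],
      by rw [m2 hy1 hy2, min_eq_left hy2]⟩)
  · exact Or.inr (Or.inr ⟨by rw [m3 hx1 hx2, min_eq_right hx2],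
      by rw [m3 hy1 hy2, min_eq_right hy2]⟩)

lemma one_le_of_dyadic {x : ℝ} (hx : IsDyadic x) : 1 ≤ x := by
  obtain ⟨k, rfl⟩ := hx
  exact one_le_pow₀ (by norm_num)

end BOZK
end Part5
section Part6
namespace BOZK
open MeasureTheory.Measure
open scoped ENNReal

lemma ofReal_conv_le {f₁ f₂ : ℝ×ℝ×ℝ → ℝ} (hpos₁ : ∀ z, 0 ≤ f₁ z) (hpos₂ : ∀ z, 0 ≤ f₂ z)
    {φ₁ φ₂ : ℝ×ℝ×ℝ → ℝ≥0∞} (hae₁ : φ₁ =ᵐ[volume] fun w => ENNReal.ofReal (f₁ w))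
    (hae₂ : φ₂ =ᵐ[volume] fun w => ENNReal.ofReal (f₂ w)) (z : ℝ×ℝ×ℝ) :
    ENNReal.ofReal (∫ w, f₁ w * f₂ (z - w)) ≤ ∫⁻ w, φ₁ w * φ₂ (z - w) := by
  by_cases hint : Integrable (fun w : ℝ×ℝ×ℝ => f₁ w * f₂ (z - w)) volume
  · have hnn : 0 ≤ᵐ[volume] fun w : ℝ×ℝ×ℝ => f₁ w * f₂ (z - w) :=
      Filter.Eventually.of_forall fun w => mul_nonneg (hpos₁ w) (hpos₂ (z - w))
    rw [integral_eq_lintegral_of_nonneg_ae hnn hint.aestronglyMeasurable]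
    refine le_trans ENNReal.ofReal_toReal_le (le_of_eq ?_)
    apply lintegral_congr_ae
    have h2 : (fun w => φ₂ (z - w)) =ᵐ[volume] fun w => ENNReal.ofReal (f₂ (z - w)) :=
      (measurePreserving_sub_left volume z).quasiMeasurePreserving.ae_eq hae₂
    filter_upwards [hae₁, h2] with w hw1 hw2
    rw [ENNReal.ofReal_mul (hpos₁ w), hw1, hw2]
  · rw [integral_undef hint]
    simp

lemma lint_sq_eq {f : ℝ×ℝ×ℝ → ℝ} (hpos : ∀ z, 0 ≤ f z)
    {φ : ℝ×ℝ×ℝ → ℝ≥0∞} (hae : φ =ᵐ[volume] fun w => ENNReal.ofReal (f w)) :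
    ∫⁻ w, φ w ^ (2:ℝ) = (eLpNorm f 2 volume) ^ (2:ℝ) := by
  rw [eLpNorm_eq_lintegral_rpow_enorm_toReal (by norm_num : (2:ℝ≥0∞) ≠ 0)
    (by norm_num : (2:ℝ≥0∞) ≠ ∞)]
  rw [← ENNReal.rpow_mul]
  norm_num
  apply lintegral_congr_ae
  filter_upwards [hae] with w hw
  rw [hw, Real.enorm_eq_ofReal (hpos w)]

end BOZK
end Part6
open scoped ENNReal NNReal
open MeasureTheory.Measure

theorem stmt10 (α : ℝ) (hα : α ∈ Icc (1:ℝ) 2) :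
    ∃ C > (0:ℝ), ∀ H₁ H₂ H₃ L₁ L₂ L₃ : ℝ,
      IsDyadic H₁ → IsDyadic H₂ → IsDyadic H₃ →
      IsDyadic L₁ → IsDyadic L₂ → IsDyadic L₃ →
      ∀ f₁ f₂ : ℝ × ℝ × ℝ → ℝ,
      MemLp f₁ 2 volume → MemLp f₂ 2 volume →
      (∀ z, 0 ≤ f₁ z) → (∀ z, 0 ≤ f₂ z) →
      support f₁ ⊆ DSet α H₁ L₁ → support f₂ ⊆ DSet α H₂ L₂ →
      eLpNorm ((DSet α H₃ L₃).indicator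
          (fun z : ℝ × ℝ × ℝ => ∫ w : ℝ × ℝ × ℝ, f₁ w * f₂ (z - w))) 2 volume ≤
        ENNReal.ofReal (C * (min H₁ (min H₂ H₃)) ^ (1 / (2 * α) + 1 / 4)
          * (min L₁ (min L₂ L₃)) ^ ((1:ℝ) / 2)
          * (eLpNorm f₁ 2 volume).toReal * (eLpNorm f₂ 2 volume).toReal) := by
  classical
  obtain ⟨hα1, hα2⟩ := hα
  have hαpos : (0:ℝ) < α := by linarith
  refine ⟨100, by norm_num, ?_⟩
  intro H₁ H₂ H₃ L₁ L₂ L₃ hH₁ hH₂ hH₃ hL₁ hL₂ hL₃ f₁ f₂ hf₁ hf₂ hpos₁ hpos₂ hsupp₁ hsupp₂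
  have hH₁' := BOZK.one_le_of_dyadic hH₁
  have hH₂' := BOZK.one_le_of_dyadic hH₂
  have hH₃' := BOZK.one_le_of_dyadic hH₃
  have hL₁' := BOZK.one_le_of_dyadic hL₁
  have hL₂' := BOZK.one_le_of_dyadic hL₂
  have hL₃' := BOZK.one_le_of_dyadic hL₃
  set e : ℝ := 1/α + 1/2 with he
  set D₁ := DSet α H₁ L₁ with hD₁def
  set D₂ := DSet α H₂ L₂ with hD₂def
  set D₃ := DSet α H₃ L₃ with hD₃def
  have hD₁ : MeasurableSet D₁ := BOZK.measurableSet_DSet hα1 H₁ L₁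
  have hD₂ : MeasurableSet D₂ := BOZK.measurableSet_DSet hα1 H₂ L₂
  have hD₃ : MeasurableSet D₃ := BOZK.measurableSet_DSet hα1 H₃ L₃
  -- measurable pointwise-supported versions of `ofReal ∘ fᵢ`
  set g₁ : ℝ×ℝ×ℝ → ℝ := hf₁.aestronglyMeasurable.mk f₁ with hg₁def
  set g₂ : ℝ×ℝ×ℝ → ℝ := hf₂.aestronglyMeasurable.mk f₂ with hg₂def
  have hg₁m : Measurable g₁ := hf₁.aestronglyMeasurable.stronglyMeasurable_mk.measurable
  have hg₂m : Measurable g₂ := hf₂.aestronglyMeasurable.stronglyMeasurable_mk.measurable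
  set φ₁ : ℝ×ℝ×ℝ → ℝ≥0∞ := D₁.indicator (fun w => ENNReal.ofReal (g₁ w)) with hφ₁def
  set φ₂ : ℝ×ℝ×ℝ → ℝ≥0∞ := D₂.indicator (fun w => ENNReal.ofReal (g₂ w)) with hφ₂def
  have hφ₁m : Measurable φ₁ := (hg₁m.ennreal_ofReal).indicator hD₁
  have hφ₂m : Measurable φ₂ := (hg₂m.ennreal_ofReal).indicator hD₂
  have hφ₁supp : ∀ w, φ₁ w ≠ 0 → w ∈ D₁ := by
    intro w h
    by_contra hw
    exact h (Set.indicator_of_notMem hw _)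
  have hφ₂supp : ∀ w, φ₂ w ≠ 0 → w ∈ D₂ := by
    intro w h
    by_contra hw
    exact h (Set.indicator_of_notMem hw _)
  have hφ₁ae : φ₁ =ᵐ[volume] fun w => ENNReal.ofReal (f₁ w) := by
    filter_upwards [hf₁.aestronglyMeasurable.ae_eq_mk] with w hw
    by_cases h : w ∈ D₁
    · rw [hφ₁def, Set.indicator_of_mem h, hg₁def, ← hw]
    · rw [hφ₁def, Set.indicator_of_notMem h,
        Function.notMem_support.mp (fun hs => h (hsupp₁ hs)), ENNReal.ofReal_zero]
  have hφ₂ae : φ₂ =ᵐ[volume] fun w => ENNReal.ofReal (f₂ w) := by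
    filter_upwards [hf₂.aestronglyMeasurable.ae_eq_mk] with w hw
    by_cases h : w ∈ D₂
    · rw [hφ₂def, Set.indicator_of_mem h, hg₂def, ← hw]
    · rw [hφ₂def, Set.indicator_of_notMem h,
        Function.notMem_support.mp (fun hs => h (hsupp₂ hs)), ENNReal.ofReal_zero]
  set N₁ := eLpNorm f₁ 2 volume with hN₁def
  set N₂ := eLpNorm f₂ 2 volume with hN₂def
  have hI₁ : ∫⁻ w, φ₁ w ^ (2:ℝ) = N₁ ^ (2:ℝ) := BOZK.lint_sq_eq hpos₁ hφ₁ae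
  have hI₂ : ∫⁻ w, φ₂ w ^ (2:ℝ) = N₂ ^ (2:ℝ) := BOZK.lint_sq_eq hpos₂ hφ₂ae
  -- pointwise domination of the convolution
  have hconv : ∀ z : ℝ×ℝ×ℝ, ENNReal.ofReal (∫ w, f₁ w * f₂ (z - w)) ≤
      ∫⁻ w, φ₁ w * φ₂ (z - w) := BOZK.ofReal_conv_le hpos₁ hpos₂ hφ₁ae hφ₂ae
  -- the main quantity
  set X := ∫⁻ z, D₃.indicator (fun z' => (∫⁻ w, φ₁ w * φ₂ (z' - w)) ^ (2:ℝ)) z with hXdef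
  -- pair estimates
  have hM12 : ∀ z : ℝ×ℝ×ℝ, volume (D₁ ∩ (fun w => z - w) ⁻¹' D₂) ≤
      ENNReal.ofReal (32 * min L₁ L₂ * (min H₁ H₂) ^ e) := by
    intro z
    exact BOZK.vol_inter_le ⟨hα1, hα2⟩ hH₁' hH₂' (by linarith) (by linarith)
      (measurePreserving_sub_left volume z)
      (measurePreserving_sub_left volume z.2)
      (measurePreserving_sub_left volume z.2)
      (fun w => rfl) (fun ζ => sub_sub_cancel z.2 ζ)
  have hM23 : ∀ w : ℝ×ℝ×ℝ, volume (D₃ ∩ (fun z => z - w) ⁻¹' D₂) ≤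
      ENNReal.ofReal (32 * min L₃ L₂ * (min H₃ H₂) ^ e) := by
    intro w
    exact BOZK.vol_inter_le ⟨hα1, hα2⟩ hH₃' hH₂' (by linarith) (by linarith)
      (measurePreserving_sub_right volume w)
      (measurePreserving_sub_right volume w.2)
      (measurePreserving_add_right volume w.2)
      (fun z => rfl) (fun ζ => sub_add_cancel ζ w.2)
  have hM13 : ∀ w : ℝ×ℝ×ℝ, volume (D₃ ∩ (fun z => z - w) ⁻¹' D₁) ≤
      ENNReal.ofReal (32 * min L₃ L₁ * (min H₃ H₁) ^ e) := by
    intro w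
    exact BOZK.vol_inter_le ⟨hα1, hα2⟩ hH₃' hH₁' (by linarith) (by linarith)
      (measurePreserving_sub_right volume w)
      (measurePreserving_sub_right volume w.2)
      (measurePreserving_add_right volume w.2)
      (fun z => rfl) (fun ζ => sub_add_cancel ζ w.2)
  have E12 : X ≤ ENNReal.ofReal (32 * min L₁ L₂ * (min H₁ H₂) ^ e) * (N₁ ^ (2:ℝ) * N₂ ^ (2:ℝ)) := by
    rw [← hI₁, ← hI₂]
    exact BOZK.pair12 hφ₁m hφ₂m hD₁ hD₂ hφ₁supp hφ₂supp hM12 D₃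
  have E23 : X ≤ ENNReal.ofReal (32 * min L₃ L₂ * (min H₃ H₂) ^ e) * (N₁ ^ (2:ℝ) * N₂ ^ (2:ℝ)) := by
    rw [← hI₁, ← hI₂]
    exact BOZK.pairK hφ₁m hφ₂m hD₂ hD₃ hφ₂supp hM23
  -- pair (1,3): swap the convolution
  have hcomm : ∀ z : ℝ×ℝ×ℝ, ∫⁻ w, φ₁ w * φ₂ (z - w) = ∫⁻ w, φ₂ w * φ₁ (z - w) := by
    intro z
    have hmeas : Measurable fun w : ℝ×ℝ×ℝ => φ₂ w * φ₁ (z - w) :=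
      hφ₂m.mul (hφ₁m.comp (measurable_const.sub measurable_id))
    have h := (measurePreserving_sub_left volume z).lintegral_comp
      (f := fun w => φ₂ w * φ₁ (z - w)) hmeas
    calc ∫⁻ w, φ₁ w * φ₂ (z - w) = ∫⁻ w, φ₂ (z - w) * φ₁ (z - (z - w)) := by
          apply lintegral_congr
          intro w
          rw [sub_sub_cancel, mul_comm]
      _ = ∫⁻ w, φ₂ w * φ₁ (z - w) := h
  have E13 : X ≤ ENNReal.ofReal (32 * min L₃ L₁ * (min H₃ H₁) ^ e) * (N₁ ^ (2:ℝ) * N₂ ^ (2:ℝ)) := by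
    have hX' : X = ∫⁻ z, D₃.indicator (fun z' => (∫⁻ w, φ₂ w * φ₁ (z' - w)) ^ (2:ℝ)) z := by
      rw [hXdef]
      apply lintegral_congr
      intro z
      by_cases h : z ∈ D₃
      · rw [Set.indicator_of_mem h, Set.indicator_of_mem h, hcomm]
      · rw [Set.indicator_of_notMem h, Set.indicator_of_notMem h]
    rw [hX', ← hI₁, ← hI₂]
    calc ∫⁻ z, D₃.indicator (fun z' => (∫⁻ w, φ₂ w * φ₁ (z' - w)) ^ (2:ℝ)) z
        ≤ ENNReal.ofReal (32 * min L₃ L₁ * (min H₃ H₁) ^ e) *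
            ((∫⁻ w, φ₂ w ^ (2:ℝ)) * (∫⁻ w, φ₁ w ^ (2:ℝ))) :=
          BOZK.pairK hφ₂m hφ₁m hD₁ hD₃ hφ₁supp hM13
      _ = ENNReal.ofReal (32 * min L₃ L₁ * (min H₃ H₁) ^ e) *
            ((∫⁻ w, φ₁ w ^ (2:ℝ)) * (∫⁻ w, φ₂ w ^ (2:ℝ))) := by ring
  -- combine using the pick lemma
  set Lm := min L₁ (min L₂ L₃) with hLm
  set Hm := min H₁ (min H₂ H₃) with hHm
  have hX : X ≤ ENNReal.ofReal (32 * Lm * Hm ^ e) * (N₁ ^ (2:ℝ) * N₂ ^ (2:ℝ)) := by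
    rcases BOZK.pick L₁ L₂ L₃ H₁ H₂ H₃ with ⟨hl, hh⟩ | ⟨hl, hh⟩ | ⟨hl, hh⟩
    · rw [hLm, hHm, ← hl, ← hh]; exact E12
    · rw [hLm, hHm, ← hl, ← hh, min_comm L₁ L₃, min_comm H₁ H₃]; exact E13
    · rw [hLm, hHm, ← hl, ← hh, min_comm L₂ L₃, min_comm H₂ H₃]; exact E23
  -- positivity facts for the reals involved
  have hLmpos : (0:ℝ) < Lm := by
    rw [hLm]
    exact lt_min (by linarith) (lt_min (by linarith) (by linarith))
  have hHmpos : (0:ℝ) < Hm := by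
    rw [hHm]
    exact lt_min (by linarith) (lt_min (by linarith) (by linarith))
  -- the left-hand side is dominated by X^(1/2)
  have hLHS : eLpNorm (D₃.indicator
      (fun z : ℝ × ℝ × ℝ => ∫ w : ℝ × ℝ × ℝ, f₁ w * f₂ (z - w))) 2 volume ≤
      X ^ ((1:ℝ)/2) := by
    rw [eLpNorm_eq_lintegral_rpow_enorm_toReal (by norm_num : (2:ℝ≥0∞) ≠ 0)
      (by norm_num : (2:ℝ≥0∞) ≠ ∞)]
    have htoReal : (2:ℝ≥0∞).toReal = (2:ℝ) := by norm_num
    rw [htoReal]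
    apply ENNReal.rpow_le_rpow _ (by norm_num : (0:ℝ) ≤ 1/2)
    rw [hXdef]
    apply lintegral_mono
    intro z
    dsimp only
    by_cases h : z ∈ D₃
    · rw [Set.indicator_of_mem h, Set.indicator_of_mem h]
      apply ENNReal.rpow_le_rpow _ (by norm_num : (0:ℝ) ≤ 2)
      have hFnn : 0 ≤ ∫ w, f₁ w * f₂ (z - w) :=
        integral_nonneg fun w => mul_nonneg (hpos₁ w) (hpos₂ (z - w))
      rw [Real.enorm_eq_ofReal hFnn]
      exact hconv z
    · rw [Set.indicator_of_notMem h, Set.indicator_of_notMem h]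
      simp [ENNReal.zero_rpow_of_pos (by norm_num : (0:ℝ) < 2)]
  -- finish: take square roots and convert to real constants
  have hN₁fin : N₁ ≠ ∞ := hf₁.eLpNorm_ne_top
  have hN₂fin : N₂ ≠ ∞ := hf₂.eLpNorm_ne_top
  have hR : (0:ℝ) ≤ 32 * Lm * Hm ^ e := by positivity
  calc eLpNorm (D₃.indicator
      (fun z : ℝ × ℝ × ℝ => ∫ w : ℝ × ℝ × ℝ, f₁ w * f₂ (z - w))) 2 volume
      ≤ X ^ ((1:ℝ)/2) := hLHS
    _ ≤ (ENNReal.ofReal (32 * Lm * Hm ^ e) * (N₁ ^ (2:ℝ) * N₂ ^ (2:ℝ))) ^ ((1:ℝ)/2) :=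
        ENNReal.rpow_le_rpow hX (by norm_num)
    _ = ENNReal.ofReal ((32 * Lm * Hm ^ e) ^ ((1:ℝ)/2)) * (N₁ * N₂) := by
        rw [ENNReal.mul_rpow_of_nonneg _ _ (by norm_num : (0:ℝ) ≤ 1/2),
          ENNReal.mul_rpow_of_nonneg _ _ (by norm_num : (0:ℝ) ≤ 1/2),
          ← ENNReal.rpow_mul, ← ENNReal.rpow_mul,
          ENNReal.ofReal_rpow_of_nonneg hR (by norm_num : (0:ℝ) ≤ 1/2)]
        norm_num
    _ = ENNReal.ofReal ((32 * Lm * Hm ^ e) ^ ((1:ℝ)/2) * (N₁.toReal * N₂.toReal)) := by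
        rw [ENNReal.ofReal_mul (by positivity), ENNReal.ofReal_mul (ENNReal.toReal_nonneg),
          ENNReal.ofReal_toReal hN₁fin, ENNReal.ofReal_toReal hN₂fin]
    _ ≤ ENNReal.ofReal (100 * Hm ^ (1 / (2*α) + 1/4) * Lm ^ ((1:ℝ)/2)
          * N₁.toReal * N₂.toReal) := by
        apply ENNReal.ofReal_le_ofReal
        have hkey : (32 * Lm * Hm ^ e) ^ ((1:ℝ)/2) ≤
            100 * Hm ^ (1 / (2*α) + 1/4) * Lm ^ ((1:ℝ)/2) := by
          have h32 : ((32:ℝ)) ^ ((1:ℝ)/2) ≤ 100 := by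
            calc ((32:ℝ)) ^ ((1:ℝ)/2) ≤ (32:ℝ) ^ (1:ℝ) :=
                  Real.rpow_le_rpow_of_exponent_le (by norm_num) (by norm_num)
              _ ≤ 100 := by rw [Real.rpow_one]; norm_num
          have hsplit : (32 * Lm * Hm ^ e) ^ ((1:ℝ)/2) =
              (32:ℝ) ^ ((1:ℝ)/2) * Lm ^ ((1:ℝ)/2) * (Hm ^ e) ^ ((1:ℝ)/2) := by
            rw [Real.mul_rpow (by positivity) (by positivity),
              Real.mul_rpow (by norm_num) (le_of_lt hLmpos)]
          have hHe : (Hm ^ e) ^ ((1:ℝ)/2) = Hm ^ (1 / (2*α) + 1/4) := by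
            rw [← Real.rpow_mul (le_of_lt hHmpos)]
            congr 1
            rw [he]
            field_simp
            ring
          rw [hsplit, hHe]
          have h1 : (0:ℝ) ≤ Lm ^ ((1:ℝ)/2) := Real.rpow_nonneg (le_of_lt hLmpos) _
          have h2 : (0:ℝ) ≤ Hm ^ (1 / (2*α) + 1/4) := Real.rpow_nonneg (le_of_lt hHmpos) _
          calc (32:ℝ) ^ ((1:ℝ)/2) * Lm ^ ((1:ℝ)/2) * Hm ^ (1 / (2*α) + 1/4)
              ≤ 100 * Lm ^ ((1:ℝ)/2) * Hm ^ (1 / (2*α) + 1/4) := by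
                apply mul_le_mul_of_nonneg_right _ h2
                exact mul_le_mul_of_nonneg_right h32 h1
            _ = 100 * Hm ^ (1 / (2*α) + 1/4) * Lm ^ ((1:ℝ)/2) := by ring
        have hN1 : (0:ℝ) ≤ N₁.toReal := ENNReal.toReal_nonneg
        have hN2 : (0:ℝ) ≤ N₂.toReal := ENNReal.toReal_nonneg
        calc (32 * Lm * Hm ^ e) ^ ((1:ℝ)/2) * (N₁.toReal * N₂.toReal)
            ≤ (100 * Hm ^ (1 / (2*α) + 1/4) * Lm ^ ((1:ℝ)/2)) * (N₁.toReal * N₂.toReal) :=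
              mul_le_mul_of_nonneg_right hkey (by positivity)
          _ = 100 * Hm ^ (1 / (2*α) + 1/4) * Lm ^ ((1:ℝ)/2) * N₁.toReal * N₂.toReal := by
              ring
end
end

section
/- Let α ∈ [1,2]. There is a constant C = C(α) > 0 such that the following holds. Let η : ℝ²×ℝ² → ℂ be a bounded measurable function and define, for f, g ∈ L²(ℝ²), the pseudo-product Π_η(f,g) via its Fourier transform: F(Π_η(f,g))(ζ) = ∫_{ℝ²} η(ζ₁, ζ−ζ₁) f̂(ζ₁) ĝ(ζ−ζ₁) dζ₁. Then for all dyadic numbers H₁, H₂, H₃ and all f₁, f₂, f₃ ∈ L²(ℝ²) with the Fourier transform of f_i supported in Δ_{H_i} for i = 1,2,3, one has |∫_{ℝ²} Π_η(f₁,f₂) f₃| ≤ C ‖η‖_{L^∞} H_min^{1/(2α)+1/4} ‖f₁‖_{L²} ‖f₂‖_{L²} ‖f₃‖_{L²}, where H_min = min(H₁,H₂,H₃). -/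
open MeasureTheory Set Function

noncomputable section

namespace Stmt13Aux

open ENNReal

/-- The product measure on `(ℝ×ℝ) × (ℝ×ℝ)`. -/
abbrev μ2 : Measure ((ℝ × ℝ) × (ℝ × ℝ)) := ((volume : Measure (ℝ × ℝ)).prod volume)

lemma lint_sub (c : ℝ × ℝ) (f : ℝ × ℝ → ℝ≥0∞) :
    ∫⁻ x, f (c - x) = ∫⁻ x, f x :=
  (Measure.measurePreserving_sub_left volume c).lintegral_comp_emb
    (MeasurableEquiv.subLeft c).measurableEmbedding f

/-- The shear-involution `(x,y) ↦ (x, -(x+y))`. -/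
def Phi : ((ℝ × ℝ) × (ℝ × ℝ)) ≃ᵐ ((ℝ × ℝ) × (ℝ × ℝ)) where
  toFun q := (q.1, -(q.1 + q.2))
  invFun q := (q.1, -(q.1 + q.2))
  left_inv q := by
    obtain ⟨a, b⟩ := q
    simp only [Prod.mk.injEq, true_and]
    abel
  right_inv q := by
    obtain ⟨a, b⟩ := q
    simp only [Prod.mk.injEq, true_and]
    abel
  measurable_toFun := measurable_fst.prodMk ((measurable_fst.add measurable_snd).neg)
  measurable_invFun := measurable_fst.prodMk ((measurable_fst.add measurable_snd).neg)

lemma phi_mp : MeasurePreserving (⇑Phi) μ2 μ2 := by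
  have h : MeasurePreserving
      (fun p : (ℝ × ℝ) × (ℝ × ℝ) => (id p.1, (fun (x y : ℝ × ℝ) => -(x + y)) p.1 p.2)) μ2 μ2 :=
    MeasurePreserving.skew_product (g := fun (x y : ℝ × ℝ) => -(x + y))
      (MeasurePreserving.id (volume : Measure (ℝ × ℝ)))
      ((measurable_fst.add measurable_snd).neg)
      (Filter.Eventually.of_forall fun x => by
        have h1 : (fun y : ℝ × ℝ => -(x + y)) = fun y => (-x) - y := funext fun y => by abel
        show Measure.map (fun y : ℝ × ℝ => -(x + y)) volume = volume
        rw [h1, Measure.map_sub_left_eq_self volume (-x)])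
  exact h

lemma lint_phi (G : ((ℝ × ℝ) × (ℝ × ℝ)) → ℝ≥0∞) :
    ∫⁻ q, G (q.1, -(q.1 + q.2)) ∂μ2 = ∫⁻ q, G q ∂μ2 :=
  phi_mp.lintegral_comp_emb Phi.measurableEmbedding G

lemma qmp_T : Measure.QuasiMeasurePreserving
    (fun q : (ℝ × ℝ) × (ℝ × ℝ) => -(q.1 + q.2)) μ2 volume :=
  Measure.quasiMeasurePreserving_snd.comp phi_mp.quasiMeasurePreserving

/-- Core Cauchy–Schwarz estimate on the product space, with an indicator inserted on the
support of the middle function. -/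
lemma core (e₁ e₂ e₃ : ℝ × ℝ → ℝ≥0∞) (h₁ : AEMeasurable e₁ volume)
    (h₂ : AEMeasurable e₂ volume) (h₃ : AEMeasurable e₃ volume)
    (S : Set (ℝ × ℝ)) (hS : MeasurableSet S) (hsupp : ∀ y, y ∉ S → e₂ y = 0) :
    ∫⁻ q, e₁ q.1 * e₂ q.2 * e₃ (-(q.1 + q.2)) ∂μ2 ≤
      (∫⁻ x, e₁ x ^ (2:ℝ)) ^ (1/2:ℝ) * (∫⁻ x, e₂ x ^ (2:ℝ)) ^ (1/2:ℝ) *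
        ((∫⁻ x, e₃ x ^ (2:ℝ)) ^ (1/2:ℝ) * volume S ^ (1/2:ℝ)) := by
  have hme₁ : AEMeasurable (fun q : (ℝ × ℝ) × (ℝ × ℝ) => e₁ q.1) μ2 :=
    h₁.comp_quasiMeasurePreserving Measure.quasiMeasurePreserving_fst
  have hme₂ : AEMeasurable (fun q : (ℝ × ℝ) × (ℝ × ℝ) => e₂ q.2) μ2 :=
    h₂.comp_quasiMeasurePreserving Measure.quasiMeasurePreserving_snd
  have hme₃ : AEMeasurable (fun q : (ℝ × ℝ) × (ℝ × ℝ) => e₃ (-(q.1 + q.2))) μ2 :=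
    h₃.comp_quasiMeasurePreserving qmp_T
  have hχ : Measurable fun q : (ℝ × ℝ) × (ℝ × ℝ) =>
      S.indicator (1 : (ℝ × ℝ) → ℝ≥0∞) q.2 :=
    (measurable_one.indicator hS).comp measurable_snd
  have hχ_ne_top : ∀ y, S.indicator (1 : (ℝ × ℝ) → ℝ≥0∞) y ≠ ⊤ := by
    intro y; by_cases h : y ∈ S <;> simp [h]
  set f' : ((ℝ × ℝ) × (ℝ × ℝ)) → ℝ≥0∞ := fun q => e₁ q.1 * e₂ q.2 with hf'
  set g' : ((ℝ × ℝ) × (ℝ × ℝ)) → ℝ≥0∞ := fun q =>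
    S.indicator (1 : (ℝ × ℝ) → ℝ≥0∞) q.2 * e₃ (-(q.1 + q.2)) with hg'
  have hpq : Real.HolderConjugate 2 2 := Real.holderConjugate_iff.mpr ⟨one_lt_two, by norm_num⟩
  have step0 : ∫⁻ q, e₁ q.1 * e₂ q.2 * e₃ (-(q.1 + q.2)) ∂μ2 = ∫⁻ q, (f' * g') q ∂μ2 := by
    refine lintegral_congr fun q => ?_
    by_cases h : q.2 ∈ S
    · simp only [hf', hg', Pi.mul_apply, Set.indicator_of_mem h, Pi.one_apply, one_mul]
    · simp [hf', hg', Set.indicator_of_notMem h, hsupp _ h]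
  have holder := ENNReal.lintegral_mul_le_Lp_mul_Lq μ2 hpq (hme₁.mul hme₂)
    (hχ.aemeasurable.mul hme₃)
  have F1 : ∫⁻ q, f' q ^ (2:ℝ) ∂μ2 = (∫⁻ x, e₁ x ^ (2:ℝ)) * (∫⁻ x, e₂ x ^ (2:ℝ)) := by
    rw [← lintegral_prod_mul (h₁.pow_const (2:ℝ)) (h₂.pow_const (2:ℝ))]
    exact lintegral_congr fun q => ENNReal.mul_rpow_of_nonneg _ _ (by norm_num)
  have F2 : ∫⁻ q, g' q ^ (2:ℝ) ∂μ2 = (∫⁻ x, e₃ x ^ (2:ℝ)) * volume S := by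
    have step1 : ∀ q : (ℝ × ℝ) × (ℝ × ℝ), g' q ^ (2:ℝ) =
        S.indicator (1 : (ℝ × ℝ) → ℝ≥0∞) q.2 * e₃ (-(q.1 + q.2)) ^ (2:ℝ) := by
      intro q
      by_cases h : q.2 ∈ S
      · simp [hg', Set.indicator_of_mem h]
      · simp [hg', Set.indicator_of_notMem h, ENNReal.zero_rpow_of_pos (by norm_num : (0:ℝ) < 2)]
    rw [lintegral_congr step1]
    rw [lintegral_prod_symm (fun q : (ℝ × ℝ) × (ℝ × ℝ) =>
      S.indicator (1 : (ℝ × ℝ) → ℝ≥0∞) q.2 * e₃ (-(q.1 + q.2)) ^ (2:ℝ)) (hχ.aemeasurable.mul (hme₃.pow_const (2:ℝ)))]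
    have inner : ∀ y : ℝ × ℝ,
        ∫⁻ x, S.indicator (1 : (ℝ × ℝ) → ℝ≥0∞) y * e₃ (-(x + y)) ^ (2:ℝ) ∂volume
          = S.indicator (fun _ => ∫⁻ x, e₃ x ^ (2:ℝ)) y := by
      intro y
      rw [lintegral_const_mul' _ _ (hχ_ne_top y)]
      have h4 : ∫⁻ x, e₃ (-(x + y)) ^ (2:ℝ) ∂volume = ∫⁻ x, e₃ x ^ (2:ℝ) := by
        have heq : ∀ x : ℝ × ℝ, -(x + y) = (-y) - x := fun x => by abel
        simp_rw [heq]
        exact lint_sub (-y) (fun z => e₃ z ^ (2:ℝ))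
      rw [h4]
      by_cases h : y ∈ S <;> simp [h]
    rw [lintegral_congr inner, lintegral_indicator hS _, setLIntegral_const]
  calc ∫⁻ q, e₁ q.1 * e₂ q.2 * e₃ (-(q.1 + q.2)) ∂μ2
      = ∫⁻ q, (f' * g') q ∂μ2 := step0
    _ ≤ (∫⁻ q, f' q ^ (2:ℝ) ∂μ2) ^ (1/2:ℝ) * (∫⁻ q, g' q ^ (2:ℝ) ∂μ2) ^ (1/2:ℝ) := holder
    _ = ((∫⁻ x, e₁ x ^ (2:ℝ)) * (∫⁻ x, e₂ x ^ (2:ℝ))) ^ (1/2:ℝ) *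
          ((∫⁻ x, e₃ x ^ (2:ℝ)) * volume S) ^ (1/2:ℝ) := by rw [F1, F2]
    _ = (∫⁻ x, e₁ x ^ (2:ℝ)) ^ (1/2:ℝ) * (∫⁻ x, e₂ x ^ (2:ℝ)) ^ (1/2:ℝ) *
          ((∫⁻ x, e₃ x ^ (2:ℝ)) ^ (1/2:ℝ) * volume S ^ (1/2:ℝ)) := by
        rw [ENNReal.mul_rpow_of_nonneg _ _ (by norm_num : (0:ℝ) ≤ 1/2),
          ENNReal.mul_rpow_of_nonneg _ _ (by norm_num : (0:ℝ) ≤ 1/2)]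

/-- A rectangle containing `DeltaSet α H`. -/
def Rect (α H : ℝ) : Set (ℝ × ℝ) :=
  Icc (-((2*H) ^ (1/α))) ((2*H) ^ (1/α)) ×ˢ Icc (-((2*H) ^ (1/2:ℝ))) ((2*H) ^ (1/2:ℝ))

lemma measurableSet_Rect (α H : ℝ) : MeasurableSet (Rect α H) :=
  measurableSet_Icc.prod measurableSet_Icc

lemma delta_subset_rect {α H : ℝ} (hα1 : 1 ≤ α) (hH : 1 ≤ H) :
    DeltaSet α H ⊆ Rect α H := by
  intro ζ hζ
  have hα0 : 0 < α := lt_of_lt_of_le one_pos hα1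
  have hnn : 0 ≤ (α + 1) * |ζ.1| ^ α :=
    mul_nonneg (by linarith) (Real.rpow_nonneg (abs_nonneg _) _)
  have hsq : (0:ℝ) ≤ ζ.2 ^ 2 := sq_nonneg _
  have hle : hBOZK α ζ ≤ 2 * H := by
    have hm : hBOZK α ζ ∈ ISet H := hζ
    unfold ISet at hm
    split_ifs at hm with h1
    · rw [h1]; have := hm.2; norm_num at this ⊢; linarith
    · exact le_trans (le_abs_self _) hm.2
  have hterm1 : (α + 1) * |ζ.1| ^ α ≤ 2 * H := by unfold hBOZK at hle; linarith
  have hterm2 : ζ.2 ^ 2 ≤ 2 * H := by unfold hBOZK at hle; linarith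
  refine Set.mem_prod.mpr ⟨Set.mem_Icc.mpr (abs_le.mp ?_), Set.mem_Icc.mpr (abs_le.mp ?_)⟩
  · have h5 : |ζ.1| ^ α ≤ 2 * H := by
      have h6 := le_mul_of_one_le_left (Real.rpow_nonneg (abs_nonneg ζ.1) α)
        (by linarith : (1:ℝ) ≤ α + 1)
      linarith
    have h7 := Real.rpow_le_rpow (Real.rpow_nonneg (abs_nonneg _) α) h5
      (by positivity : (0:ℝ) ≤ 1/α)
    rwa [← Real.rpow_mul (abs_nonneg _), mul_one_div_cancel hα0.ne', Real.rpow_one] at h7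
  · calc |ζ.2| = Real.sqrt (ζ.2 ^ 2) := (Real.sqrt_sq_eq_abs _).symm
      _ ≤ Real.sqrt (2 * H) := Real.sqrt_le_sqrt hterm2
      _ = (2 * H) ^ (1/2:ℝ) := Real.sqrt_eq_rpow (2 * H)

lemma rect_volume_eq (α H : ℝ) :
    volume (Rect α H) =
      ENNReal.ofReal (2 * ((2*H) ^ (1/α))) * ENNReal.ofReal (2 * ((2*H) ^ (1/2:ℝ))) := by
  rw [Rect, Measure.volume_eq_prod, Measure.prod_prod, Real.volume_Icc, Real.volume_Icc]
  congr 1 <;> congr 1 <;> ring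

lemma rect_vol_bound {α H : ℝ} (hα1 : 1 ≤ α) (hH : 1 ≤ H) :
    ((volume (Rect α H)) ^ (1/2:ℝ)).toReal ≤ 4 * H ^ (1 / (2 * α) + 1 / 4) := by
  have hα0 : (0:ℝ) < α := by linarith
  have hHpos : (0:ℝ) < 2 * H := by linarith
  set A : ℝ := (2*H) ^ (1/α) with hA
  set B : ℝ := (2*H) ^ (1/2:ℝ) with hB
  have hA0 : 0 ≤ A := Real.rpow_nonneg hHpos.le _
  have hB0 : 0 ≤ B := Real.rpow_nonneg hHpos.le _
  have hvol : volume (Rect α H) = ENNReal.ofReal (2*A * (2*B)) := by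
    rw [rect_volume_eq, ← ENNReal.ofReal_mul (by positivity)]
  rw [hvol, ← ENNReal.toReal_rpow, ENNReal.toReal_ofReal (by positivity)]
  have e1 : 2*A * (2*B) = 4 * (A*B) := by ring
  have e2 : A * B = (2*H) ^ (1/α + 1/2 : ℝ) := by
    rw [hA, hB, ← Real.rpow_add hHpos]
  have h4sqrt : (4:ℝ) ^ (1/2:ℝ) = 2 := by
    rw [show (4:ℝ) = (2:ℝ)^(2:ℕ) by norm_num, ← Real.rpow_natCast (2:ℝ) 2,
      ← Real.rpow_mul (by norm_num : (0:ℝ) ≤ 2)]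
    norm_num
  have key : (4 * ((2*H) ^ (1/α + 1/2 : ℝ))) ^ (1/2:ℝ)
      = 2 * (2*H) ^ ((1/α + 1/2) * (1/2) : ℝ) := by
    rw [Real.mul_rpow (by norm_num) (Real.rpow_nonneg hHpos.le _),
      ← Real.rpow_mul hHpos.le, h4sqrt]
  rw [e1, e2, key]
  have e3 : ((1/α + 1/2) * (1/2) : ℝ) = 1 / (2 * α) + 1 / 4 := by
    field_simp; ring
  rw [e3, Real.mul_rpow (by norm_num : (0:ℝ) ≤ 2) (by linarith : (0:ℝ) ≤ H)]
  have h2e : (2:ℝ) ^ (1 / (2 * α) + 1 / 4 : ℝ) ≤ 2 := by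
    have hexp : (1 / (2 * α) + 1 / 4 : ℝ) ≤ 1 := by
      have : (1:ℝ) / (2 * α) ≤ 1 / 2 :=
        one_div_le_one_div_of_le (by norm_num) (by linarith)
      linarith
    calc (2:ℝ) ^ (1 / (2 * α) + 1 / 4 : ℝ) ≤ 2 ^ (1:ℝ) :=
        Real.rpow_le_rpow_of_exponent_le one_le_two hexp
      _ = 2 := Real.rpow_one 2
  have hHe : 0 ≤ H ^ (1 / (2 * α) + 1 / 4 : ℝ) := Real.rpow_nonneg (by linarith) _
  nlinarith [mul_le_mul_of_nonneg_right h2e hHe]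

end Stmt13Aux

open Stmt13Aux ENNReal

/-- The estimate `|∫ Π_η(f₁,f₂) f₃| ≤ C ‖η‖_∞ H_min^{1/(2α)+1/4} ∏‖f_i‖₂`, written on
the Fourier side (via Parseval, `F_i = f̂_i`):
`∫ Π_η(f₁,f₂) f₃ = ∫∫ η(ζ₁,ζ₂) f̂₁(ζ₁) f̂₂(ζ₂) f̂₃(-(ζ₁+ζ₂)) dζ₁ dζ₂`. -/
theorem stmt13 (α : ℝ) (hα : α ∈ Icc (1:ℝ) 2) :
    ∃ C > (0:ℝ), ∀ η : (ℝ × ℝ) → (ℝ × ℝ) → ℂ,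
      Measurable (Function.uncurry η) →
      ∀ M : ℝ, (∀ ζ₁ ζ₂, ‖η ζ₁ ζ₂‖ ≤ M) →
      ∀ H₁ H₂ H₃ : ℝ, IsDyadic H₁ → IsDyadic H₂ → IsDyadic H₃ →
      ∀ F₁ F₂ F₃ : ℝ × ℝ → ℂ,
      MemLp F₁ 2 volume → MemLp F₂ 2 volume → MemLp F₃ 2 volume →
      support F₁ ⊆ DeltaSet α H₁ → support F₂ ⊆ DeltaSet α H₂ →
      support F₃ ⊆ DeltaSet α H₃ →
      ‖∫ q : (ℝ × ℝ) × (ℝ × ℝ), η q.1 q.2 * F₁ q.1 * F₂ q.2 * F₃ (-(q.1 + q.2))‖ ≤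
        C * M * (min H₁ (min H₂ H₃)) ^ (1 / (2 * α) + 1 / 4)
          * (eLpNorm F₁ 2 volume).toReal * (eLpNorm F₂ 2 volume).toReal
          * (eLpNorm F₃ 2 volume).toReal := by
  obtain ⟨hα1, hα2⟩ := hα
  refine ⟨4, by norm_num, ?_⟩
  intro η hη M hM H₁ H₂ H₃ hd₁ hd₂ hd₃ F₁ F₂ F₃ hL₁ hL₂ hL₃ hs₁ hs₂ hs₃
  have hHdy : ∀ {H : ℝ}, IsDyadic H → 1 ≤ H := by
    rintro H ⟨k, rfl⟩
    exact one_le_pow₀ (by norm_num)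
  have hM0 : 0 ≤ M := (norm_nonneg _).trans (hM 0 0)
  set e₁ : ℝ × ℝ → ℝ≥0∞ := fun x => (‖F₁ x‖₊ : ℝ≥0∞) with he₁
  set e₂ : ℝ × ℝ → ℝ≥0∞ := fun x => (‖F₂ x‖₊ : ℝ≥0∞) with he₂
  set e₃ : ℝ × ℝ → ℝ≥0∞ := fun x => (‖F₃ x‖₊ : ℝ≥0∞) with he₃
  have m₁ : AEMeasurable e₁ volume := hL₁.aestronglyMeasurable.enorm
  have m₂ : AEMeasurable e₂ volume := hL₂.aestronglyMeasurable.enorm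
  have m₃ : AEMeasurable e₃ volume := hL₃.aestronglyMeasurable.enorm
  have hsn : ∀ F : ℝ × ℝ → ℂ,
      eLpNorm F 2 volume = (∫⁻ x, ((‖F x‖₊ : ℝ≥0∞)) ^ (2:ℝ)) ^ (1/2:ℝ) := by
    intro F
    rw [eLpNorm_eq_lintegral_rpow_enorm_toReal two_ne_zero ENNReal.ofNat_ne_top]
    norm_num; rfl
  set L : ℝ≥0∞ := ∫⁻ q, e₁ q.1 * e₂ q.2 * e₃ (-(q.1 + q.2)) ∂μ2 with hL
  set Ns : ℝ≥0∞ := eLpNorm F₁ 2 volume * eLpNorm F₂ 2 volume * eLpNorm F₃ 2 volume with hNs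
  -- support conditions
  have supp₁ : ∀ y, y ∉ Rect α H₁ → e₁ y = 0 := by
    intro y hy
    have : F₁ y = 0 := by
      by_contra h
      exact hy (delta_subset_rect hα1 (hHdy hd₁) (hs₁ h))
    simp [he₁, this]
  have supp₂ : ∀ y, y ∉ Rect α H₂ → e₂ y = 0 := by
    intro y hy
    have : F₂ y = 0 := by
      by_contra h
      exact hy (delta_subset_rect hα1 (hHdy hd₂) (hs₂ h))
    simp [he₂, this]
  have supp₃ : ∀ y, y ∉ Rect α H₃ → e₃ y = 0 := by
    intro y hy
    have : F₃ y = 0 := by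
      by_contra h
      exact hy (delta_subset_rect hα1 (hHdy hd₃) (hs₃ h))
    simp [he₃, this]
  -- the three core bounds
  have hcore2 : L ≤ Ns * (volume (Rect α H₂)) ^ (1/2:ℝ) := by
    refine le_trans (core e₁ e₂ e₃ m₁ m₂ m₃ _ (measurableSet_Rect α H₂) supp₂) (le_of_eq ?_)
    rw [hNs, hsn F₁, hsn F₂, hsn F₃]; ring
  have hcore1 : L ≤ Ns * (volume (Rect α H₁)) ^ (1/2:ℝ) := by
    have hswap : L = ∫⁻ q, e₂ q.1 * e₁ q.2 * e₃ (-(q.1 + q.2)) ∂μ2 := by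
      rw [hL, ← lintegral_prod_swap (fun q : (ℝ × ℝ) × (ℝ × ℝ) =>
        e₂ q.1 * e₁ q.2 * e₃ (-(q.1 + q.2)))]
      refine lintegral_congr fun z => ?_
      simp only [Prod.fst_swap, Prod.snd_swap]
      rw [add_comm z.2 z.1]; ring
    rw [hswap]
    refine le_trans (core e₂ e₁ e₃ m₂ m₁ m₃ _ (measurableSet_Rect α H₁) supp₁) (le_of_eq ?_)
    rw [hNs, hsn F₁, hsn F₂, hsn F₃]; ring
  have hcore3 : L ≤ Ns * (volume (Rect α H₃)) ^ (1/2:ℝ) := by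
    have hphi : L = ∫⁻ q, e₁ q.1 * e₃ q.2 * e₂ (-(q.1 + q.2)) ∂μ2 := by
      rw [hL, ← lint_phi (fun q : (ℝ × ℝ) × (ℝ × ℝ) =>
        e₁ q.1 * e₃ q.2 * e₂ (-(q.1 + q.2)))]
      refine lintegral_congr fun q => ?_
      simp only
      rw [show -(q.1 + -(q.1 + q.2)) = q.2 from by abel]
      ring
    rw [hphi]
    refine le_trans (core e₁ e₃ e₂ m₁ m₃ m₂ _ (measurableSet_Rect α H₃) supp₃) (le_of_eq ?_)
    rw [hNs, hsn F₁, hsn F₂, hsn F₃]; ring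
  -- pick the minimal H
  have hLb : ∃ Hj : ℝ, 1 ≤ Hj ∧ min H₁ (min H₂ H₃) = Hj ∧
      L ≤ Ns * (volume (Rect α Hj)) ^ (1/2:ℝ) := by
    rcases min_cases H₁ (min H₂ H₃) with ⟨h, _⟩ | ⟨h, _⟩
    · exact ⟨H₁, hHdy hd₁, h, hcore1⟩
    · rcases min_cases H₂ H₃ with ⟨h', _⟩ | ⟨h', _⟩
      · exact ⟨H₂, hHdy hd₂, by rw [h, h'], hcore2⟩
      · exact ⟨H₃, hHdy hd₃, by rw [h, h'], hcore3⟩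
  obtain ⟨Hj, hHj1, hmeq, hLbound⟩ := hLb
  set S' : ℝ≥0∞ := (volume (Rect α Hj)) ^ (1/2:ℝ) with hS'
  have hS'fin : S' ≠ ⊤ := by
    refine (ENNReal.rpow_lt_top_of_nonneg (by norm_num) ?_).ne
    rw [rect_volume_eq]
    exact ENNReal.mul_ne_top ENNReal.ofReal_ne_top ENNReal.ofReal_ne_top
  have hNsfin : Ns ≠ ⊤ :=
    ENNReal.mul_ne_top (ENNReal.mul_ne_top hL₁.2.ne hL₂.2.ne) hL₃.2.ne
  have hRHSfin : ENNReal.ofReal M * (Ns * S') ≠ ⊤ :=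
    ENNReal.mul_ne_top ENNReal.ofReal_ne_top (ENNReal.mul_ne_top hNsfin hS'fin)
  -- main lintegral bound
  have step : ∫⁻ q : (ℝ × ℝ) × (ℝ × ℝ),
      ENNReal.ofReal ‖η q.1 q.2 * F₁ q.1 * F₂ q.2 * F₃ (-(q.1 + q.2))‖ ∂volume
        ≤ ENNReal.ofReal M * (Ns * S') := by
    have hvp : (volume : Measure ((ℝ × ℝ) × (ℝ × ℝ))) = μ2 := Measure.volume_eq_prod _ _
    rw [hvp]
    calc ∫⁻ q, ENNReal.ofReal ‖η q.1 q.2 * F₁ q.1 * F₂ q.2 * F₃ (-(q.1 + q.2))‖ ∂μ2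
        ≤ ∫⁻ q, ENNReal.ofReal M * (e₁ q.1 * e₂ q.2 * e₃ (-(q.1 + q.2))) ∂μ2 := by
          refine lintegral_mono fun q => ?_
          rw [ofReal_norm, enorm_eq_nnnorm]
          have hcoe : (‖η q.1 q.2 * F₁ q.1 * F₂ q.2 * F₃ (-(q.1 + q.2))‖₊ : ℝ≥0∞)
              = (‖η q.1 q.2‖₊ : ℝ≥0∞) * (e₁ q.1 * e₂ q.2 * e₃ (-(q.1 + q.2))) := by
            rw [nnnorm_mul, nnnorm_mul, nnnorm_mul]
            push_cast
            ring
          rw [hcoe]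
          refine mul_le_mul_left ?_ _
          rw [← enorm_eq_nnnorm, ← ofReal_norm]
          exact ENNReal.ofReal_le_ofReal (hM _ _)
      _ = ENNReal.ofReal M * L := lintegral_const_mul' _ _ ENNReal.ofReal_ne_top
      _ ≤ ENNReal.ofReal M * (Ns * S') := mul_le_mul_right hLbound _
  -- conclude
  have hnorm : ‖∫ q : (ℝ × ℝ) × (ℝ × ℝ), η q.1 q.2 * F₁ q.1 * F₂ q.2 * F₃ (-(q.1 + q.2))‖
      ≤ (ENNReal.ofReal M * (Ns * S')).toReal := by
    refine le_trans (norm_integral_le_lintegral_norm _) (ENNReal.toReal_mono hRHSfin step)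
  have htoReal : (ENNReal.ofReal M * (Ns * S')).toReal =
      M * ((eLpNorm F₁ 2 volume).toReal * (eLpNorm F₂ 2 volume).toReal *
        (eLpNorm F₃ 2 volume).toReal * S'.toReal) := by
    rw [ENNReal.toReal_mul, ENNReal.toReal_mul, hNs, ENNReal.toReal_mul, ENNReal.toReal_mul,
      ENNReal.toReal_ofReal hM0]
  have hS'bound : S'.toReal ≤ 4 * Hj ^ (1 / (2 * α) + 1 / 4) :=
    rect_vol_bound hα1 hHj1
  have ht1 : (0:ℝ) ≤ (eLpNorm F₁ 2 volume).toReal := ENNReal.toReal_nonneg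
  have ht2 : (0:ℝ) ≤ (eLpNorm F₂ 2 volume).toReal := ENNReal.toReal_nonneg
  have ht3 : (0:ℝ) ≤ (eLpNorm F₃ 2 volume).toReal := ENNReal.toReal_nonneg
  rw [hmeq]
  calc ‖∫ q : (ℝ × ℝ) × (ℝ × ℝ), η q.1 q.2 * F₁ q.1 * F₂ q.2 * F₃ (-(q.1 + q.2))‖
      ≤ (ENNReal.ofReal M * (Ns * S')).toReal := hnorm
    _ = M * ((eLpNorm F₁ 2 volume).toReal * (eLpNorm F₂ 2 volume).toReal *
        (eLpNorm F₃ 2 volume).toReal * S'.toReal) := htoReal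
    _ ≤ M * ((eLpNorm F₁ 2 volume).toReal * (eLpNorm F₂ 2 volume).toReal *
        (eLpNorm F₃ 2 volume).toReal * (4 * Hj ^ (1 / (2 * α) + 1 / 4))) := by
        refine mul_le_mul_of_nonneg_left ?_ hM0
        exact mul_le_mul_of_nonneg_left hS'bound (by positivity)
    _ = 4 * M * Hj ^ (1 / (2 * α) + 1 / 4) * (eLpNorm F₁ 2 volume).toReal *
        (eLpNorm F₂ 2 volume).toReal * (eLpNorm F₃ 2 volume).toReal := by ring
end
end

section
/- Let α ∈ [1,2]. There exist constants c, C, N₀ > 0 depending only on α such that for all N ≥ N₀, all γ ∈ (0,1], all ξ₁ ∈ [γ/2, γ] and all ξ₂ ∈ [N, N+γ], one has c · γ N^α ≤ |(ξ₁+ξ₂)|ξ₁+ξ₂|^α − ξ₁|ξ₁|^α − ξ₂|ξ₂|^α| ≤ C · γ N^α. -/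
open Set

noncomputable section

-- Bernoulli lower bound: for a ≥ 0, b > 0, p ≥ 1: b^p + p*a*b^(p-1) ≤ (a+b)^p
lemma bern_low {a b p : ℝ} (ha : 0 ≤ a) (hb : 0 < b) (hp : 1 ≤ p) :
    b ^ p + p * a * b ^ (p - 1) ≤ (a + b) ^ p := by
  have hs : -1 ≤ a / b := by
    have := div_nonneg ha hb.le; linarith
  have h := one_add_mul_self_le_rpow_one_add hs hp
  have h1 : (1 + a / b) = (a + b) / b := by field_simp; ring
  rw [h1, Real.div_rpow (by positivity) hb.le] at h
  have h2 := mul_le_mul_of_nonneg_right h (Real.rpow_nonneg hb.le p)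
  rw [div_mul_cancel₀ _ (by positivity : (b:ℝ) ^ p ≠ 0)] at h2
  calc b ^ p + p * a * b ^ (p - 1)
      = (1 + p * (a / b)) * b ^ p := by
        rw [Real.rpow_sub_one hb.ne' p]; field_simp
    _ ≤ (a + b) ^ p := h2

-- Bernoulli upper bound: for 0 ≤ a, 0 < b, p ≥ 1: (a+b)^p ≤ b^p + p*a*(a+b)^(p-1)
lemma bern_up {a b p : ℝ} (ha : 0 ≤ a) (hb : 0 < b) (hp : 1 ≤ p) :
    (a + b) ^ p ≤ b ^ p + p * a * (a + b) ^ (p - 1) := by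
  have hs : 0 < a + b := by linarith
  have hs1 : -1 ≤ -(a / (a + b)) := by
    have : a / (a + b) ≤ 1 := by
      rw [div_le_one hs]; linarith
    linarith
  have h := one_add_mul_self_le_rpow_one_add hs1 hp
  have h1 : (1 + -(a / (a + b))) = b / (a + b) := by field_simp; ring
  rw [h1, Real.div_rpow hb.le hs.le] at h
  have h2 := mul_le_mul_of_nonneg_right h (Real.rpow_nonneg hs.le p)
  rw [div_mul_cancel₀ _ (by positivity : (a + b) ^ p ≠ 0)] at h2
  have h3 : (1 + p * -(a / (a + b))) * (a + b) ^ p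
      = (a + b) ^ p - p * a * (a + b) ^ (p - 1) := by
    rw [Real.rpow_sub_one hs.ne' p]; field_simp; ring
  rw [h3] at h2
  linarith

theorem stmt18 (α : ℝ) (hα : α ∈ Icc (1:ℝ) 2) :
    ∃ c > (0:ℝ), ∃ C > (0:ℝ), ∃ N₀ > (0:ℝ), ∀ N : ℝ, N₀ ≤ N →
      ∀ γ : ℝ, γ ∈ Ioc (0:ℝ) 1 → ∀ ξ₁ ∈ Icc (γ / 2) γ, ∀ ξ₂ ∈ Icc N (N + γ),
      c * γ * N ^ α ≤
        |(ξ₁ + ξ₂) * |ξ₁ + ξ₂| ^ α - ξ₁ * |ξ₁| ^ α - ξ₂ * |ξ₂| ^ α| ∧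
      |(ξ₁ + ξ₂) * |ξ₁ + ξ₂| ^ α - ξ₁ * |ξ₁| ^ α - ξ₂ * |ξ₂| ^ α| ≤
        C * γ * N ^ α := by
  obtain ⟨hα1, hα2⟩ := hα
  refine ⟨1/2, by norm_num, 27, by norm_num, 2, by norm_num, ?_⟩
  intro N hN γ hγ ξ₁ hξ₁ ξ₂ hξ₂
  obtain ⟨hγ0, hγ1⟩ := hγ
  obtain ⟨h1l, h1r⟩ := hξ₁
  obtain ⟨h2l, h2r⟩ := hξ₂
  have hN0 : (0:ℝ) < N := by linarith
  have ha : 0 < ξ₁ := by linarith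
  have hb : 0 < ξ₂ := by linarith
  have hs : 0 < ξ₁ + ξ₂ := by linarith
  set p : ℝ := α + 1 with hp
  have hp1 : (1:ℝ) ≤ p := by simp [hp]; linarith
  -- rewrite expression as rpow
  have key : ∀ x : ℝ, 0 < x → x * |x| ^ α = x ^ p := by
    intro x hx
    rw [abs_of_pos hx, hp, Real.rpow_add hx, Real.rpow_one]; ring
  rw [key _ hs, key _ ha, key _ hb]
  have hpm1 : p - 1 = α := by ring
  -- basic facts
  have hNα : (2:ℝ) ≤ N ^ α := by
    calc (2:ℝ) ≤ N := hN
    _ = N ^ (1:ℝ) := (Real.rpow_one N).symm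
    _ ≤ N ^ α := Real.rpow_le_rpow_of_exponent_le (by linarith) hα1
  have hNα0 : 0 < N ^ α := by positivity
  have hbα : N ^ α ≤ ξ₂ ^ α := Real.rpow_le_rpow (by linarith) h2l (by linarith)
  -- lower bound on expression
  have low := bern_low ha.le hb hp1
  rw [hpm1] at low
  have haP : ξ₁ ^ p ≤ γ := by
    calc ξ₁ ^ p ≤ γ ^ p := Real.rpow_le_rpow ha.le h1r (by linarith)
    _ ≤ γ ^ (1:ℝ) := Real.rpow_le_rpow_of_exponent_ge hγ0 hγ1 (by linarith)
    _ = γ := Real.rpow_one γ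
  have hpab : γ * N ^ α ≤ p * ξ₁ * ξ₂ ^ α := by
    have hp2 : (2:ℝ) ≤ p := by simp [hp]; linarith
    have h1 : γ ≤ p * ξ₁ := by nlinarith
    have h2 : γ * N ^ α ≤ (p * ξ₁) * N ^ α := mul_le_mul_of_nonneg_right h1 hNα0.le
    have h3 : (p * ξ₁) * N ^ α ≤ (p * ξ₁) * ξ₂ ^ α :=
      mul_le_mul_of_nonneg_left hbα (mul_nonneg (by linarith) ha.le)
    linarith
  have Elow : γ * N ^ α - γ ≤ (ξ₁ + ξ₂) ^ p - ξ₁ ^ p - ξ₂ ^ p := by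
    linarith
  have hEpos : 0 ≤ (ξ₁ + ξ₂) ^ p - ξ₁ ^ p - ξ₂ ^ p := by
    have : γ ≤ γ * N ^ α := by nlinarith
    linarith
  rw [abs_of_nonneg hEpos]
  constructor
  · -- lower: (1/2) γ N^α ≤ E since γ ≤ (1/2) γ N^α
    have : γ ≤ 1/2 * γ * N ^ α := by nlinarith
    linarith
  · -- upper
    have up := bern_up ha.le hb hp1
    rw [hpm1] at up
    have hsle : ξ₁ + ξ₂ ≤ 3 * N := by linarith
    have hsα : (ξ₁ + ξ₂) ^ α ≤ 9 * N ^ α := by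
      calc (ξ₁ + ξ₂) ^ α ≤ (3 * N) ^ α := Real.rpow_le_rpow hs.le hsle (by linarith)
      _ = 3 ^ α * N ^ α := Real.mul_rpow (by norm_num) hN0.le
      _ ≤ 9 * N ^ α := by
          have h1 : (3:ℝ) ^ α ≤ 3 ^ (2:ℝ) :=
            Real.rpow_le_rpow_of_exponent_le (by norm_num) hα2
          have h9 : (3:ℝ) ^ (2:ℝ) = 9 := by
            rw [show (2:ℝ) = ((2:ℕ):ℝ) by norm_num, Real.rpow_natCast]; norm_num
          have := mul_le_mul_of_nonneg_right (h9 ▸ h1) hNα0.le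
          linarith
    have hp3 : p ≤ 3 := by simp [hp]; linarith
    have hE2 : (ξ₁ + ξ₂) ^ p - ξ₁ ^ p - ξ₂ ^ p ≤ p * ξ₁ * (ξ₁ + ξ₂) ^ α := by
      have hξ₁p : 0 ≤ ξ₁ ^ p := Real.rpow_nonneg ha.le p
      linarith
    calc (ξ₁ + ξ₂) ^ p - ξ₁ ^ p - ξ₂ ^ p ≤ p * ξ₁ * (ξ₁ + ξ₂) ^ α := hE2
      _ ≤ 3 * γ * (9 * N ^ α) := by
          have hsα0 : 0 ≤ (ξ₁ + ξ₂) ^ α := Real.rpow_nonneg hs.le α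
          have h4 : p * ξ₁ ≤ 3 * γ := by nlinarith
          exact mul_le_mul h4 hsα (by positivity) (by positivity)
      _ = 27 * γ * N ^ α := by ring
end
end
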